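/- arXiv:1805.04960 — 5 statements merged into one kernel-verified Lean document; each statement's English description precedes it below -/
import Mathlib

section
/- Let M be the Vámos matroid V₈ on ground set {a₁, a₁′, a₂, a₂′, b₁, b₁′, b₂, b₂′}, the rank-4 paving matroid whose non-spanning circuits are {a₁,a₁′,a₂,a₂′}, {a₁,a₁′,b₁,b₁′}, {a₁,a₁′,b₂,b₂′}, {a₂,a₂′,b₁,b₁′}, and {b₁,b₁′,b₂,b₂′}. Then there is no single-element extension of V₈ by a non-loop element p such that both {a₁,a₁′,p} and {b₁,b₁′,p} contain circuits through p lying on the lines spanned by {a₁,a₁′} and {b₁,b₁′} respectively; that is, no extension of V₈ by p has p ∈ cl({a₁,a₁′}) ∩ cl({b₁,b₁′}) with p not a loop. -/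
open Set

variable {α : Type*}

/-- The rank of a set in a matroid: the supremum of cardinalities of independent subsets. -/
noncomputable def mRk (M : Matroid α) (X : Set α) : ℕ :=
  sSup (Set.ncard '' {I | M.Indep I ∧ I ⊆ X})

/-- Local connectivity `⊓(S, T) = r(S) + r(T) − r(S ∪ T)`. -/
noncomputable def mConn (M : Matroid α) (S T : Set α) : ℤ :=
  (mRk M S : ℤ) + (mRk M T : ℤ) - (mRk M (S ∪ T) : ℤ)

/-- A circuit: a minimal dependent set. -/
def mCircuit (M : Matroid α) (C : Set α) : Prop :=
  M.Dep C ∧ ∀ D, D ⊂ C → ¬ M.Dep D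

/-- `M'` is a single-element extension of `M` by the element `p`:
`p` is a new element, the ground set grows by `p`, and deleting `p` recovers `M`. -/
def ExtBy (M' M : Matroid α) (p : α) : Prop :=
  p ∉ M.E ∧ M'.E = insert p M.E ∧ M'.restrict M.E = M

/-- `M'` is an extension of `M` by the two new elements `x` and `y`. -/
def ExtBy2 (M' M : Matroid α) (x y : α) : Prop :=
  x ∉ M.E ∧ y ∉ M.E ∧ x ≠ y ∧ M'.E = insert x (insert y M.E) ∧ M'.restrict M.E = M

/-- `(A, B)` is an exact 3-separation of `M`: a partition of the ground set with
`r(A) + r(B) − r(M) = 2`. -/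
def Exact3Sep (M : Matroid α) (A B : Set α) : Prop :=
  Disjoint A B ∧ A ∪ B = M.E ∧
    (mRk M A : ℤ) + (mRk M B : ℤ) - (mRk M M.E : ℤ) = 2

/-- An `A`-strand relative to the separation `(A, B)`: a minimal subset `S` of `A` with
`⊓(S, B) = 1`. -/
def Strand (M : Matroid α) (A B S : Set α) : Prop :=
  S ⊆ A ∧ mConn M S B = 1 ∧ ∀ S', S' ⊂ S → mConn M S' B ≠ 1


lemma vx_indep_encard_le_basis {M : Matroid α} {D X B : Set α} (hD : M.Indep D)
    (hDX : D ⊆ M.closure X) (hB : M.IsBasis B X) : D.encard ≤ B.encard := by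
  obtain ⟨J, hJ, hDJ⟩ := hD.subset_isBasis_of_subset hDX (M.closure_subset_ground X)
  exact (Set.encard_mono hDJ).trans (hJ.encard_eq_encard hB.isBasis_closure_right).le

lemma vx_indep_encard_le {M : Matroid α} {D U : Set α} (hD : M.Indep D)
    (hDU : D ⊆ M.closure U) (hU : U ⊆ M.E) : D.encard ≤ U.encard := by
  obtain ⟨B, hB⟩ := M.exists_isBasis U hU
  exact (vx_indep_encard_le_basis hD hDU hB).trans (Set.encard_mono hB.subset)

lemma vx_basis_encard_le {M : Matroid α} {X B : Set α} (hX : ¬ M.Indep X)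
    (hX4 : X.encard ≤ 4) (hB : M.IsBasis B X) : B.encard ≤ 3 := by
  have hne : B ≠ X := fun h => hX (h ▸ hB.indep)
  obtain ⟨y, hyX, hyB⟩ := exists_of_ssubset (hB.subset.ssubset_of_ne hne)
  have hBsub : B ⊆ X \ {y} := subset_diff_singleton hB.subset hyB
  have := (Set.encard_mono hBsub).trans_eq (Set.encard_diff_singleton_of_mem hyX)
  exact this.trans (le_trans (tsub_le_tsub_right hX4 1) (by decide))

/-- If `p ∈ cl{w,w'}` and `{w,w',x,x'}` is dependent while `{x,x',p}` is independent of
size 3, then `cl{x,x',p} = cl{w,w',x,x'}`. -/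
lemma vx_closure_eq {M' : Matroid α} {w w' x x' p : α}
    (hw : p ∈ M'.closure {w, w'}) (hdep : ¬ M'.Indep {w, w', x, x'})
    (hg : ({w, w', x, x'} : Set α) ⊆ M'.E)
    (hI : M'.Indep {x, x', p}) (hI3 : ({x, x', p} : Set α).encard = 3) :
    M'.closure {x, x', p} = M'.closure ({w, w', x, x'} : Set α) := by
  set I : Set α := {x, x', p} with hIdef
  set C : Set α := {w, w', x, x'} with hCdef
  have hIC : I ⊆ M'.closure C := by
    have hxC : x ∈ M'.closure C := M'.subset_closure C hg (by simp [hCdef])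
    have hx'C : x' ∈ M'.closure C := M'.subset_closure C hg (by simp [hCdef])
    have hpC : p ∈ M'.closure C :=
      M'.closure_subset_closure (by intro z hz; simp [hCdef] at hz ⊢; tauto) hw
    intro z hz
    simp only [hIdef, mem_insert_iff, mem_singleton_iff] at hz
    rcases hz with rfl | rfl | rfl <;> assumption
  obtain ⟨J, hJ, hIJ⟩ := hI.subset_isBasis_of_subset hIC (M'.closure_subset_ground C)
  have hC4 : C.encard ≤ 4 := by
    calc C.encard ≤ ({w', x, x'} : Set α).encard + 1 := Set.encard_insert_le _ _
      _ ≤ (({x, x'} : Set α).encard + 1) + 1 :=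
          add_le_add_left (Set.encard_insert_le _ _) 1
      _ ≤ ((({x'} : Set α).encard + 1) + 1) + 1 :=
          add_le_add_left (add_le_add_left (Set.encard_insert_le _ _) 1) 1
      _ ≤ 4 := by rw [Set.encard_singleton]; decide
  obtain ⟨B, hB⟩ := M'.exists_isBasis C hg
  have hJ3 : J.encard ≤ 3 :=
    (vx_indep_encard_le_basis hJ.indep hJ.subset hB).trans (vx_basis_encard_le hdep hC4 hB)
  have hJI : J = I :=
    ((Set.finite_of_encard_le_coe (show J.encard ≤ (3:ℕ) from hJ3)).eq_of_subset_of_encard_le'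
      hIJ (hJ3.trans_eq hI3.symm)).symm
  rw [← hJI, hJ.closure_eq_closure, M'.closure_closure]

lemma vx_claim {M' : Matroid α} {u u' v v' x x' p : α}
    (hu : p ∈ M'.closure {u, u'}) (hv : p ∈ M'.closure {v, v'})
    (hCu : ¬ M'.Indep {u, u', x, x'}) (hCv : ¬ M'.Indep {v, v', x, x'})
    (hD : M'.Indep {u, x, x', v})
    (hI3 : ({x, x', p} : Set α).encard = 3)
    (hD4 : ({u, x, x', v} : Set α).encard = 4)
    (hgu : ({u, u', x, x'} : Set α) ⊆ M'.E)
    (hgv : ({v, v', x, x'} : Set α) ⊆ M'.E) :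
    ¬ M'.Indep {x, x', p} := by
  intro hI
  have e1 := vx_closure_eq hu hCu hgu hI hI3
  have e2 := vx_closure_eq hv hCv hgv hI hI3
  have hIcl : ({x, x', p} : Set α) ⊆ M'.closure {x, x', p} :=
    M'.subset_closure _ hI.subset_ground
  have hDsub : ({u, x, x', v} : Set α) ⊆ M'.closure {x, x', p} := by
    intro z hz
    simp only [mem_insert_iff, mem_singleton_iff] at hz
    rcases hz with rfl | rfl | rfl | rfl
    · exact e1 ▸ M'.subset_closure _ hgu (by simp)
    · exact hIcl (by simp)
    · exact hIcl (by simp)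
    · exact e2 ▸ M'.subset_closure _ hgv (by simp)
  have := vx_indep_encard_le hD hDsub hI.subset_ground
  rw [hD4, hI3] at this
  exact absurd this (by decide)

lemma vx_final {M' : Matroid α} {x x' y y' p : α}
    (hx : ¬ M'.Indep {x, x', p}) (hy : ¬ M'.Indep {y, y', p})
    (hp : M'.Indep {p})
    (hD : M'.Indep {x, x', y, y'})
    (hD4 : ({x, x', y, y'} : Set α).encard = 4)
    (hgx : ({x, x', p} : Set α) ⊆ M'.E)
    (hgy : ({y, y', p} : Set α) ⊆ M'.E) : False := by
  -- bases of {x,x',p} and {y,y',p} containing p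
  have key : ∀ w w' : α, ¬ M'.Indep {w, w', p} → ({w, w', p} : Set α) ⊆ M'.E →
      ∃ J, M'.IsBasis J ({w, w', p} : Set α) ∧ p ∈ J ∧ (J \ {p}).encard ≤ 1 := by
    intro w w' hdep hg
    obtain ⟨J, hJ, hpJ⟩ := hp.subset_isBasis_of_subset
      (show ({p} : Set α) ⊆ {w, w', p} by simp) hg
    refine ⟨J, hJ, hpJ rfl, ?_⟩
    have hne : J ≠ ({w, w', p} : Set α) := fun h => hdep (h ▸ hJ.indep)
    obtain ⟨z, hzX, hzJ⟩ := exists_of_ssubset (hJ.subset.ssubset_of_ne hne)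
    have hzp : z ≠ p := fun h => hzJ (h ▸ hpJ rfl)
    have hsub : J \ {p} ⊆ ({w, w'} : Set α) \ {z} := by
      intro t ht
      have htX := hJ.subset ht.1
      simp only [mem_insert_iff, mem_singleton_iff] at htX
      have htz : t ≠ z := fun h => hzJ (h ▸ ht.1)
      rcases htX with rfl | rfl | rfl
      · exact ⟨by simp, by simpa using htz⟩
      · exact ⟨by simp, by simpa using htz⟩
      · exact absurd rfl ht.2
    have hz2 : z ∈ ({w, w'} : Set α) := by
      simp only [mem_insert_iff, mem_singleton_iff] at hzX ⊢
      rcases hzX with rfl | rfl | rfl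
      · simp
      · simp
      · exact absurd rfl hzp
    calc (J \ {p}).encard ≤ (({w, w'} : Set α) \ {z}).encard := Set.encard_mono hsub
      _ = ({w, w'} : Set α).encard - 1 := Set.encard_diff_singleton_of_mem hz2
      _ ≤ (({w'} : Set α).encard + 1) - 1 := tsub_le_tsub_right (Set.encard_insert_le _ _) 1
      _ ≤ 1 := by rw [Set.encard_singleton]; decide
  obtain ⟨Ja, hJa, hpJa, hJa1⟩ := key x x' hx hgx
  obtain ⟨Jb, hJb, hpJb, hJb1⟩ := key y y' hy hgy
  set U : Set α := Ja ∪ Jb with hUdef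
  have hUE : U ⊆ M'.E := union_subset (hJa.subset.trans hgx) (hJb.subset.trans hgy)
  have hU3 : U.encard ≤ 3 := by
    have hsub : U ⊆ insert p ((Ja \ {p}) ∪ (Jb \ {p})) := by
      intro t ht
      rcases ht with ht | ht
      · by_cases h : t = p
        · simp [h]
        · exact mem_insert_of_mem _ (Or.inl ⟨ht, h⟩)
      · by_cases h : t = p
        · simp [h]
        · exact mem_insert_of_mem _ (Or.inr ⟨ht, h⟩)
    calc U.encard ≤ ((Ja \ {p}) ∪ (Jb \ {p})).encard + 1 :=
          (Set.encard_mono hsub).trans (Set.encard_insert_le _ _)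
      _ ≤ ((Ja \ {p}).encard + (Jb \ {p}).encard) + 1 :=
          add_le_add_left (Set.encard_union_le _ _) 1
      _ ≤ (1 + 1) + 1 := add_le_add_left (add_le_add hJa1 hJb1) 1
      _ = 3 := by decide
  have hDsub : ({x, x', y, y'} : Set α) ⊆ M'.closure U := by
    have hca : M'.closure Ja ⊆ M'.closure U := M'.closure_subset_closure subset_union_left
    have hcb : M'.closure Jb ⊆ M'.closure U := M'.closure_subset_closure subset_union_right
    have hXa : ({x, x', p} : Set α) ⊆ M'.closure U := by
      have h1 := M'.subset_closure ({x, x', p} : Set α) hgx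
      rw [← hJa.closure_eq_closure] at h1
      exact h1.trans hca
    have hXb : ({y, y', p} : Set α) ⊆ M'.closure U := by
      have h1 := M'.subset_closure ({y, y', p} : Set α) hgy
      rw [← hJb.closure_eq_closure] at h1
      exact h1.trans hcb
    intro z hz
    simp only [mem_insert_iff, mem_singleton_iff] at hz
    rcases hz with rfl | rfl | rfl | rfl
    · exact hXa (by simp)
    · exact hXa (by simp)
    · exact hXb (by simp)
    · exact hXb (by simp)
  have := vx_indep_encard_le hD hDsub hUE
  rw [hD4] at this
  exact absurd (this.trans hU3) (by decide)


lemma vx_set_ne {s t : Set α} {w : α} (hw : w ∈ s) (hw' : w ∉ t) : s ≠ t :=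
  fun h => hw' (h ▸ hw)

lemma vx_encard3 {a b c : α} (hab : a ≠ b) (hac : a ≠ c) (hbc : b ≠ c) :
    ({a, b, c} : Set α).encard = 3 := by
  rw [Set.encard_insert_of_notMem (by simp [hab, hac]),
    Set.encard_insert_of_notMem (by simp [hbc]), Set.encard_singleton]
  decide

lemma vx_encard4 {a b c d : α} (hab : a ≠ b) (hac : a ≠ c) (had : a ≠ d)
    (hbc : b ≠ c) (hbd : b ≠ d) (hcd : c ≠ d) :
    ({a, b, c, d} : Set α).encard = 4 := by
  rw [Set.encard_insert_of_notMem (by simp [hab, hac, had]),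
    Set.encard_insert_of_notMem (by simp [hbc, hbd]),
    Set.encard_insert_of_notMem (by simp [hcd]), Set.encard_singleton]
  decide

lemma vx_ncard_le {s : Set α} (h : s.encard = 4) : s.ncard ≤ 4 := by
  rw [Set.ncard_def, h]; rfl


set_option maxHeartbeats 1000000 in
/-- The Vámos matroid `V₈` has no extension by a non-loop element `p` lying on both the
line spanned by `{a₁, a₁'}` and the line spanned by `{b₁, b₁'}`. -/
theorem vamos_no_extension (a₁ a₁' a₂ a₂' b₁ b₁' b₂ b₂' : α)
    (hnd : ([a₁, a₁', a₂, a₂', b₁, b₁', b₂, b₂'] : List α).Nodup)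
    (M : Matroid α)
    (hE : M.E = {a₁, a₁', a₂, a₂', b₁, b₁', b₂, b₂'})
    (hIndep : ∀ I : Set α, M.Indep I ↔ I ⊆ M.E ∧ I.ncard ≤ 4 ∧
      I ∉ ({{a₁, a₁', a₂, a₂'}, {a₁, a₁', b₁, b₁'}, {a₁, a₁', b₂, b₂'},
        {a₂, a₂', b₁, b₁'}, {b₁, b₁', b₂, b₂'}} : Set (Set α))) :
    ¬ ∃ (M' : Matroid α) (p : α), ExtBy M' M p ∧
      p ∈ M'.closure {a₁, a₁'} ∩ M'.closure {b₁, b₁'} ∧ M'.Indep {p} := by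
  rintro ⟨M', p, ⟨hpM, hE', hres⟩, ⟨hpa, hpb⟩, hp⟩
  simp only [List.nodup_cons, List.mem_cons, List.not_mem_nil, or_false, not_or,
    List.nodup_nil, and_true, not_false_eq_true, List.mem_singleton] at hnd
  obtain ⟨⟨n12,n13,n14,n15,n16,n17,n18⟩,⟨n23,n24,n25,n26,n27,n28⟩,⟨n34,n35,n36,n37,n38⟩,
    ⟨n45,n46,n47,n48⟩,⟨n56,n57,n58⟩,⟨n67,n68⟩,n78⟩ := hnd
  -- p is a new element
  have h3p : a₂ ≠ p := fun h => hpM (h ▸ (show a₂ ∈ M.E by rw [hE]; simp))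
  have h4p : a₂' ≠ p := fun h => hpM (h ▸ (show a₂' ∈ M.E by rw [hE]; simp))
  have h7p : b₂ ≠ p := fun h => hpM (h ▸ (show b₂ ∈ M.E by rw [hE]; simp))
  have h8p : b₂' ≠ p := fun h => hpM (h ▸ (show b₂' ∈ M.E by rw [hE]; simp))
  have hME : M.E ⊆ M'.E := hE' ▸ subset_insert p M.E
  have hpE' : p ∈ M'.E := hE' ▸ mem_insert p M.E
  -- transfer of independence
  have htr : ∀ I : Set α, I ⊆ M.E → (M'.Indep I ↔ M.Indep I) := by
    intro I hIE
    constructor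
    · intro h
      have h' : (M'.restrict M.E).Indep I := (M'.restrict_indep_iff).mpr ⟨h, hIE⟩
      rwa [hres] at h'
    · intro h
      rw [← hres] at h
      exact (Matroid.restrict_indep_iff.mp h).1
  -- subsets of the ground set
  have hsubE : ∀ s : Set α, s ⊆ ({a₁, a₁', a₂, a₂', b₁, b₁', b₂, b₂'} : Set α) → s ⊆ M.E :=
    fun s hs => hE ▸ hs
  have hg1 : ({a₁, a₁', a₂, a₂'} : Set α) ⊆ M.E := by
    apply hsubE; intro z hz; simp only [mem_insert_iff, mem_singleton_iff] at hz ⊢; tauto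
  have hg2 : ({b₁, b₁', a₂, a₂'} : Set α) ⊆ M.E := by
    apply hsubE; intro z hz; simp only [mem_insert_iff, mem_singleton_iff] at hz ⊢; tauto
  have hg3 : ({a₁, a₁', b₂, b₂'} : Set α) ⊆ M.E := by
    apply hsubE; intro z hz; simp only [mem_insert_iff, mem_singleton_iff] at hz ⊢; tauto
  have hg4 : ({b₁, b₁', b₂, b₂'} : Set α) ⊆ M.E := by
    apply hsubE; intro z hz; simp only [mem_insert_iff, mem_singleton_iff] at hz ⊢; tauto
  have hgD1 : ({a₁, a₂, a₂', b₁} : Set α) ⊆ M.E := by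
    apply hsubE; intro z hz; simp only [mem_insert_iff, mem_singleton_iff] at hz ⊢; tauto
  have hgD2 : ({a₁, b₂, b₂', b₁} : Set α) ⊆ M.E := by
    apply hsubE; intro z hz; simp only [mem_insert_iff, mem_singleton_iff] at hz ⊢; tauto
  have hgD3 : ({a₂, a₂', b₂, b₂'} : Set α) ⊆ M.E := by
    apply hsubE; intro z hz; simp only [mem_insert_iff, mem_singleton_iff] at hz ⊢; tauto
  -- dependence of circuits in M'
  have hdep : ∀ C : Set α, C ⊆ M.E →
      C ∈ ({{a₁, a₁', a₂, a₂'}, {a₁, a₁', b₁, b₁'}, {a₁, a₁', b₂, b₂'},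
        {a₂, a₂', b₁, b₁'}, {b₁, b₁', b₂, b₂'}} : Set (Set α)) → ¬ M'.Indep C :=
    fun C hCE hC h => ((hIndep C).mp ((htr C hCE).mp h)).2.2 hC
  have hdC1 : ¬ M'.Indep {a₁, a₁', a₂, a₂'} := hdep _ hg1 (by simp)
  have hdC3 : ¬ M'.Indep {a₁, a₁', b₂, b₂'} := hdep _ hg3 (by simp)
  have hdC5 : ¬ M'.Indep {b₁, b₁', b₂, b₂'} := hdep _ hg4 (by simp)
  have hdC4 : ¬ M'.Indep {b₁, b₁', a₂, a₂'} := by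
    apply hdep _ hg2
    simp only [mem_insert_iff, mem_singleton_iff]
    refine Or.inr (Or.inr (Or.inr (Or.inl ?_)))
    ext z; simp only [mem_insert_iff, mem_singleton_iff]; tauto
  -- encard computations
  have hI3a : ({a₂, a₂', p} : Set α).encard = 3 := vx_encard3 n34 h3p h4p
  have hI3b : ({b₂, b₂', p} : Set α).encard = 3 := vx_encard3 n78 h7p h8p
  have hD4a : ({a₁, a₂, a₂', b₁} : Set α).encard = 4 := vx_encard4 n13 n14 n15 n34 n35 n45
  have hD4b : ({a₁, b₂, b₂', b₁} : Set α).encard = 4 :=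
    vx_encard4 n17 n18 n15 n78 (Ne.symm n57) (Ne.symm n58)
  have hD4c : ({a₂, a₂', b₂, b₂'} : Set α).encard = 4 := vx_encard4 n34 n37 n38 n47 n48 n78
  -- independence of the D sets
  have hD1 : M'.Indep {a₁, a₂, a₂', b₁} := by
    refine (htr _ hgD1).mpr ((hIndep _).mpr ⟨hgD1, vx_ncard_le hD4a, ?_⟩)
    simp only [mem_insert_iff, mem_singleton_iff, not_or]
    refine ⟨vx_set_ne (show b₁ ∈ ({a₁, a₂, a₂', b₁} : Set α) by simp)
        (by simp only [mem_insert_iff, mem_singleton_iff, not_or]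
            exact ⟨(Ne.symm n15), (Ne.symm n25), (Ne.symm n35), (Ne.symm n45)⟩),
      vx_set_ne (show a₂ ∈ ({a₁, a₂, a₂', b₁} : Set α) by simp)
        (by simp only [mem_insert_iff, mem_singleton_iff, not_or]
            exact ⟨(Ne.symm n13), (Ne.symm n23), n35, n36⟩),
      vx_set_ne (show a₂ ∈ ({a₁, a₂, a₂', b₁} : Set α) by simp)
        (by simp only [mem_insert_iff, mem_singleton_iff, not_or]
            exact ⟨(Ne.symm n13), (Ne.symm n23), n37, n38⟩),
      vx_set_ne (show a₁ ∈ ({a₁, a₂, a₂', b₁} : Set α) by simp)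
        (by simp only [mem_insert_iff, mem_singleton_iff, not_or]
            exact ⟨n13, n14, n15, n16⟩),
      vx_set_ne (show a₁ ∈ ({a₁, a₂, a₂', b₁} : Set α) by simp)
        (by simp only [mem_insert_iff, mem_singleton_iff, not_or]
            exact ⟨n15, n16, n17, n18⟩)⟩
  have hD2 : M'.Indep {a₁, b₂, b₂', b₁} := by
    refine (htr _ hgD2).mpr ((hIndep _).mpr ⟨hgD2, vx_ncard_le hD4b, ?_⟩)
    simp only [mem_insert_iff, mem_singleton_iff, not_or]
    refine ⟨vx_set_ne (show b₁ ∈ ({a₁, b₂, b₂', b₁} : Set α) by simp)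
        (by simp only [mem_insert_iff, mem_singleton_iff, not_or]
            exact ⟨(Ne.symm n15), (Ne.symm n25), (Ne.symm n35), (Ne.symm n45)⟩),
      vx_set_ne (show b₂ ∈ ({a₁, b₂, b₂', b₁} : Set α) by simp)
        (by simp only [mem_insert_iff, mem_singleton_iff, not_or]
            exact ⟨(Ne.symm n17), (Ne.symm n27), (Ne.symm n57), (Ne.symm n67)⟩),
      vx_set_ne (show b₁ ∈ ({a₁, b₂, b₂', b₁} : Set α) by simp)
        (by simp only [mem_insert_iff, mem_singleton_iff, not_or]
            exact ⟨(Ne.symm n15), (Ne.symm n25), n57, n58⟩),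
      vx_set_ne (show a₁ ∈ ({a₁, b₂, b₂', b₁} : Set α) by simp)
        (by simp only [mem_insert_iff, mem_singleton_iff, not_or]
            exact ⟨n13, n14, n15, n16⟩),
      vx_set_ne (show a₁ ∈ ({a₁, b₂, b₂', b₁} : Set α) by simp)
        (by simp only [mem_insert_iff, mem_singleton_iff, not_or]
            exact ⟨n15, n16, n17, n18⟩)⟩
  have hD3 : M'.Indep {a₂, a₂', b₂, b₂'} := by
    refine (htr _ hgD3).mpr ((hIndep _).mpr ⟨hgD3, vx_ncard_le hD4c, ?_⟩)
    simp only [mem_insert_iff, mem_singleton_iff, not_or]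
    refine ⟨vx_set_ne (show b₂ ∈ ({a₂, a₂', b₂, b₂'} : Set α) by simp)
        (by simp only [mem_insert_iff, mem_singleton_iff, not_or]
            exact ⟨(Ne.symm n17), (Ne.symm n27), (Ne.symm n37), (Ne.symm n47)⟩),
      vx_set_ne (show a₂ ∈ ({a₂, a₂', b₂, b₂'} : Set α) by simp)
        (by simp only [mem_insert_iff, mem_singleton_iff, not_or]
            exact ⟨(Ne.symm n13), (Ne.symm n23), n35, n36⟩),
      vx_set_ne (show a₂ ∈ ({a₂, a₂', b₂, b₂'} : Set α) by simp)
        (by simp only [mem_insert_iff, mem_singleton_iff, not_or]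
            exact ⟨(Ne.symm n13), (Ne.symm n23), n37, n38⟩),
      vx_set_ne (show b₂ ∈ ({a₂, a₂', b₂, b₂'} : Set α) by simp)
        (by simp only [mem_insert_iff, mem_singleton_iff, not_or]
            exact ⟨(Ne.symm n37), (Ne.symm n47), (Ne.symm n57), (Ne.symm n67)⟩),
      vx_set_ne (show a₂ ∈ ({a₂, a₂', b₂, b₂'} : Set α) by simp)
        (by simp only [mem_insert_iff, mem_singleton_iff, not_or]
            exact ⟨n35, n36, n37, n38⟩)⟩
  -- ground-set facts in M'
  have hg1' : ({a₁, a₁', a₂, a₂'} : Set α) ⊆ M'.E := hg1.trans hME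
  have hg2' : ({b₁, b₁', a₂, a₂'} : Set α) ⊆ M'.E := hg2.trans hME
  have hg3' : ({a₁, a₁', b₂, b₂'} : Set α) ⊆ M'.E := hg3.trans hME
  have hg4' : ({b₁, b₁', b₂, b₂'} : Set α) ⊆ M'.E := hg4.trans hME
  have hgxa : ({a₂, a₂', p} : Set α) ⊆ M'.E := by
    intro z hz; simp only [mem_insert_iff, mem_singleton_iff] at hz
    rcases hz with rfl | rfl | rfl
    · exact hME (by rw [hE]; simp)
    · exact hME (by rw [hE]; simp)
    · exact hpE'
  have hgxb : ({b₂, b₂', p} : Set α) ⊆ M'.E := by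
    intro z hz; simp only [mem_insert_iff, mem_singleton_iff] at hz
    rcases hz with rfl | rfl | rfl
    · exact hME (by rw [hE]; simp)
    · exact hME (by rw [hE]; simp)
    · exact hpE'
  -- the two claims and the final contradiction
  have hxa : ¬ M'.Indep {a₂, a₂', p} :=
    vx_claim hpa hpb hdC1 hdC4 hD1 hI3a hD4a hg1' hg2'
  have hxb : ¬ M'.Indep {b₂, b₂', p} :=
    vx_claim hpa hpb hdC3 hdC5 hD2 hI3b hD4b hg3' hg4'
  exact vx_final hxa hxb hp hD3 hD4c hgxa hgxb
end

section
/- Let (A, B) be an exact 3-separation of a matroid M, and let A₀ be an A-strand and B₀ a B-strand with ⊓(A₀, B₀) = 1. If M has an extension by an element p in which both A₀ ∪ {p} and B₀ ∪ {p} are circuits, then M has no A-strand A₁ ≠ A₀ and B-strand B₁ ≠ B₀ such that exactly two of ⊓(A₀, B₁), ⊓(A₁, B₀), and ⊓(A₁, B₁) equal one. -/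
open Set

variable {α : Type*}

/-- `e` and `f` are clones: interchanging them is an automorphism of `M`. -/
def mClones [DecidableEq α] (M : Matroid α) (e f : α) : Prop :=
  M.mapEquiv (Equiv.swap e f) = M

/-- `e` and `f` are independent clones. -/
def mIndepClones [DecidableEq α] (M : Matroid α) (e f : α) : Prop :=
  mClones M e f ∧ M.Indep {e, f}

/-- `z` is fixed in `M`: there is no extension of `M` by an element `z'` in which
`z` and `z'` are independent clones. -/
def mFixed [DecidableEq α] (M : Matroid α) (z : α) : Prop :=
  ¬ ∃ (M' : Matroid α) (z' : α), ExtBy M' M z' ∧ mIndepClones M' z z'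

/-- `M''` is obtained from `M` by freely adding the independent clones `x` and `y`
to the guts line of the separation `(A, B)`. -/
def GutsPairExt [DecidableEq α] (M'' M : Matroid α) (A B : Set α) (x y : α) : Prop :=
  ExtBy2 M'' M x y ∧ mIndepClones M'' x y ∧
    ({x, y} : Set α) ⊆ M''.closure A ∩ M''.closure B

/-- Contraction of the set `C` from `M`, defined by duality. -/
noncomputable def mContract (M : Matroid α) (C : Set α) : Matroid α :=
  (M.dual.restrict (M.E \ C)).dual

/-- `S` is a separator of the matroid `N`. -/
def mSeparator (N : Matroid α) (S : Set α) : Prop :=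
  (mRk N S : ℤ) + (mRk N (N.E \ S) : ℤ) = (mRk N N.E : ℤ)

/-- Adjacency in the strand graph of `(M, A, B)`: a strand on one side is adjacent to a
strand on the other side when their local connectivity is one. -/
def StrandAdj (M : Matroid α) (A B : Set α) (S T : Set α) : Prop :=
  ((Strand M A B S ∧ Strand M B A T) ∨ (Strand M B A S ∧ Strand M A B T)) ∧ mConn M S T = 1

/-- Exactly two of the three integers are equal to one. -/
def ExactlyTwoOne (a b c : ℤ) : Prop :=
  (a = 1 ∧ b = 1 ∧ c ≠ 1) ∨ (a = 1 ∧ c = 1 ∧ b ≠ 1) ∨ (b = 1 ∧ c = 1 ∧ a ≠ 1)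


/-! ### Auxiliary rank theory -/

section AuxRank

variable {M : Matroid α} {I J X Y S T Q : Set α}

/-- The `ℕ∞`-valued rank of a set. -/
noncomputable def eR (M : Matroid α) (X : Set α) : ℕ∞ :=
  sSup (Set.encard '' {I | M.Indep I ∧ I ⊆ X})

lemma le_eR_of_indep (hI : M.Indep I) (hIX : I ⊆ X) : I.encard ≤ eR M X :=
  le_sSup ⟨I, ⟨hI, hIX⟩, rfl⟩

lemma eR_le {c : ℕ∞} (h : ∀ I, M.Indep I → I ⊆ X → I.encard ≤ c) : eR M X ≤ c :=
  sSup_le (by rintro _ ⟨I, ⟨h1, h2⟩, rfl⟩; exact h I h1 h2)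

lemma encard_le_basis' (hJ : M.IsBasis' J X) (hI : M.Indep I) (hIX : I ⊆ X) :
    I.encard ≤ J.encard := by
  by_contra hlt
  push_neg at hlt
  obtain ⟨e, he, hins⟩ := hJ.indep.augment hI hlt
  exact hJ.insert_not_indep ⟨hIX he.1, he.2⟩ hins

lemma eR_basis' (hJ : M.IsBasis' J X) : eR M X = J.encard :=
  le_antisymm (eR_le fun I h1 h2 => encard_le_basis' hJ h1 h2)
    (le_eR_of_indep hJ.indep hJ.subset)

lemma eR_mono (M : Matroid α) {X Y : Set α} (h : X ⊆ Y) : eR M X ≤ eR M Y :=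
  eR_le fun I h1 h2 => le_eR_of_indep h1 (h2.trans h)

lemma eR_indep (hI : M.Indep I) : eR M I = I.encard :=
  le_antisymm (eR_le fun _ _ hJ => encard_mono hJ) (le_eR_of_indep hI Subset.rfl)

lemma eR_le_encard (M : Matroid α) (X : Set α) : eR M X ≤ X.encard :=
  eR_le fun _ _ h => encard_mono h

lemma eR_empty (M : Matroid α) : eR M ∅ = 0 :=
  le_antisymm (by simpa using eR_le_encard M ∅) zero_le

lemma eR_submod (M : Matroid α) (X Y : Set α) :
    eR M (X ∪ Y) + eR M (X ∩ Y) ≤ eR M X + eR M Y := by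
  obtain ⟨I, hI⟩ := M.exists_isBasis' (X ∩ Y)
  obtain ⟨J, hJ, hIJ⟩ := hI.indep.subset_isBasis'_of_subset
    (hI.subset.trans inter_subset_left |>.trans subset_union_left)
  have hJX : M.Indep (J ∩ X) := hJ.indep.subset inter_subset_left
  have hJY : M.Indep (J ∩ Y) := hJ.indep.subset inter_subset_left
  have hIeq : J ∩ (X ∩ Y) = I :=
    (hI.eq_of_subset_indep (hJ.indep.subset inter_subset_left)
      (subset_inter hIJ hI.subset) inter_subset_right).symm
  have hJeq : (J ∩ X) ∪ (J ∩ Y) = J := by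
    rw [← inter_union_distrib_left, inter_eq_self_of_subset_left hJ.subset]
  have hJint : (J ∩ X) ∩ (J ∩ Y) = I := by
    rw [← hIeq]; ext x; simp; tauto
  calc eR M (X ∪ Y) + eR M (X ∩ Y) = J.encard + I.encard := by
        rw [eR_basis' hJ, eR_basis' hI]
    _ = ((J ∩ X) ∪ (J ∩ Y)).encard + ((J ∩ X) ∩ (J ∩ Y)).encard := by rw [hJeq, hJint]
    _ = (J ∩ X).encard + (J ∩ Y).encard := Set.encard_union_add_encard_inter _ _
    _ ≤ eR M X + eR M Y :=
        add_le_add (le_eR_of_indep hJX inter_subset_right)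
          (le_eR_of_indep hJY inter_subset_right)

lemma eR_union_le (M : Matroid α) (X Y : Set α) : eR M (X ∪ Y) ≤ eR M X + eR M Y :=
  le_trans (le_add_right le_rfl) (eR_submod M X Y)

lemma eR_restrict (M : Matroid α) {R X : Set α} (hXR : X ⊆ R) :
    eR (M.restrict R) X = eR M X := by
  unfold eR
  congr 1
  ext n
  constructor
  · rintro ⟨I, ⟨h1, h2⟩, rfl⟩
    exact ⟨I, ⟨(Matroid.restrict_indep_iff.mp h1).1, h2⟩, rfl⟩
  · rintro ⟨I, ⟨h1, h2⟩, rfl⟩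
    exact ⟨I, ⟨Matroid.restrict_indep_iff.mpr ⟨h1, h2.trans hXR⟩, h2⟩, rfl⟩

lemma mRk_eq_toNat (M : Matroid α) (X : Set α) : mRk M X = (eR M X).toNat := by
  obtain ⟨I, hI⟩ := M.exists_isBasis' X
  rw [eR_basis' hI]
  rcases I.finite_or_infinite with hfin | hinf
  · have hub : ∀ n ∈ Set.ncard '' {I | M.Indep I ∧ I ⊆ X}, n ≤ I.ncard := by
      rintro _ ⟨J, ⟨h1, h2⟩, rfl⟩
      have hle := encard_le_basis' hI h1 h2
      rw [Set.ncard_def, Set.ncard_def]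
      exact ENat.toNat_le_toNat hle hfin.encard_lt_top.ne
    have h1 : mRk M X = I.ncard := by
      refine le_antisymm (csSup_le ⟨0, ⟨∅, ⟨M.empty_indep, empty_subset X⟩, by simp⟩⟩ hub) ?_
      exact le_csSup ⟨I.ncard, hub⟩ ⟨I, ⟨hI.indep, hI.subset⟩, rfl⟩
    rw [h1, Set.ncard_def]
  · rw [hinf.encard_eq, ENat.toNat_top]
    have hnb : ¬ BddAbove (Set.ncard '' {I | M.Indep I ∧ I ⊆ X}) := by
      rintro ⟨n, hn⟩
      obtain ⟨J, hJI, hJfin, hJcard⟩ := hinf.exists_subset_ncard_eq (n + 1)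
      have := hn ⟨J, ⟨hI.indep.subset hJI, hJI.trans hI.subset⟩, rfl⟩
      omega
    rw [mRk, csSup_of_not_bddAbove hnb, csSup_empty]
    rfl

lemma enat_cancel {a b c : ℕ∞} (hc : c ≠ ⊤) (h : a + c ≤ b + c) : a ≤ b := by
  rcases eq_or_ne b ⊤ with rfl | hb
  · exact le_top
  lift c to ℕ using hc
  lift b to ℕ using hb
  rcases eq_or_ne a ⊤ with rfl | ha
  · simp [← Nat.cast_add] at h
  lift a to ℕ using ha
  rw [← Nat.cast_add, ← Nat.cast_add, Nat.cast_le] at h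
  exact_mod_cast Nat.le_of_add_le_add_right h

lemma mConn_eq_one_iff (hS : eR M S ≠ ⊤) (hT : eR M T ≠ ⊤) :
    mConn M S T = 1 ↔ eR M S + eR M T = eR M (S ∪ T) + 1 := by
  have hU : eR M (S ∪ T) ≠ ⊤ :=
    ne_top_of_le_ne_top (WithTop.add_ne_top.mpr ⟨hS, hT⟩) (eR_union_le M S T)
  lift eR M S to ℕ using hS with s hs
  lift eR M T to ℕ using hT with t ht
  lift eR M (S ∪ T) to ℕ using hU with u hu
  rw [mConn, mRk_eq_toNat, mRk_eq_toNat, mRk_eq_toNat, ← hs, ← ht, ← hu]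
  simp only [ENat.toNat_coe]
  constructor
  · intro h
    have : s + t = u + 1 := by omega
    exact_mod_cast this
  · intro h
    have : s + t = u + 1 := by exact_mod_cast h
    omega

lemma mConn_empty (M : Matroid α) (Q : Set α) : mConn M ∅ Q = 0 := by
  rw [mConn, mRk_eq_toNat, mRk_eq_toNat, mRk_eq_toNat, empty_union, eR_empty]
  simp

lemma strand_eR_ne_top {A : Set α} (hS : Strand M A Q S) (hSE : S ⊆ M.E) : eR M S ≠ ⊤ := by
  intro htop
  obtain ⟨I, hI⟩ := M.exists_isBasis' S
  have hIinf : I.Infinite := by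
    rw [← Set.encard_eq_top_iff, ← eR_basis' hI, htop]
  obtain ⟨S', hS'sub, hS'⟩ : ∃ S', S' ⊂ S ∧ eR M S' = ⊤ := by
    rcases hI.subset.ssubset_or_eq with hss | rfl
    · refine ⟨I, hss, top_le_iff.mp ?_⟩
      rw [← hIinf.encard_eq]
      exact le_eR_of_indep hI.indep Subset.rfl
    · obtain ⟨x, hx⟩ := hIinf.nonempty
      refine ⟨I \ {x}, sdiff_singleton_ssubset.mpr hx, top_le_iff.mp ?_⟩
      have hinf' : (I \ {x}).Infinite := hIinf.diff (finite_singleton x)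
      rw [← hinf'.encard_eq]
      exact le_eR_of_indep (hI.indep.subset diff_subset) Subset.rfl
  have hSQ : eR M (S ∪ Q) = ⊤ := top_le_iff.mp (htop ▸ eR_mono M subset_union_left)
  have hq : mRk M Q = 1 := by
    have h1 := hS.2.1
    rw [mConn, mRk_eq_toNat M S, mRk_eq_toNat M (S ∪ Q), htop, hSQ] at h1
    simp only [ENat.toNat_top, Nat.cast_zero, zero_add, sub_zero] at h1
    exact_mod_cast h1
  have hS'Q : eR M (S' ∪ Q) = ⊤ := top_le_iff.mp (hS' ▸ eR_mono M subset_union_left)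
  refine hS.2.2 S' hS'sub ?_
  rw [mConn, mRk_eq_toNat M S', mRk_eq_toNat M (S' ∪ Q), hS', hS'Q, hq]
  simp

/-- Spreading `p ∈ cl(C)` to supersets of `C`, in terms of rank. -/
lemma eR_insert_spread {p : α} {C Y : Set α} (hfin : eR M C ≠ ⊤)
    (hC : eR M (insert p C) = eR M C) (hCY : C ⊆ Y) :
    eR M (insert p Y) = eR M Y := by
  refine le_antisymm ?_ (eR_mono M (subset_insert _ _))
  have hsub := eR_submod M Y (insert p C)
  rw [show Y ∪ insert p C = insert p Y by
    rw [Set.union_insert, union_eq_self_of_subset_right hCY]] at hsub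
  have hint : eR M C ≤ eR M (Y ∩ insert p C) :=
    eR_mono M (subset_inter hCY (subset_insert _ _))
  have hkey : eR M (insert p Y) + eR M C ≤ eR M Y + eR M C := by
    calc eR M (insert p Y) + eR M C ≤ eR M (insert p Y) + eR M (Y ∩ insert p C) :=
          add_le_add_right hint _
      _ ≤ eR M Y + eR M (insert p C) := hsub
      _ = eR M Y + eR M C := by rw [hC]
  exact enat_cancel hfin hkey

/-- The local-connectivity upper bound coming from `mConn M S Q = 1`. -/
lemma conn_le_of_strandconn (hfinS : eR M S ≠ ⊤) (hconn : mConn M S Q = 1)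
    (hTQ : T ⊆ Q) (hfinT : eR M T ≠ ⊤) :
    eR M S + eR M T ≤ eR M (S ∪ T) + 1 := by
  rcases eq_or_ne (eR M Q) ⊤ with hQ | hQ
  · have hSQ : eR M (S ∪ Q) = ⊤ :=
      top_le_iff.mp (hQ ▸ eR_mono M subset_union_right)
    rw [mConn, mRk_eq_toNat, mRk_eq_toNat, mRk_eq_toNat, hQ, hSQ] at hconn
    simp only [ENat.toNat_top, Nat.cast_zero, add_zero, sub_zero] at hconn
    have hs1 : eR M S = 1 := by
      have h2 := ENat.coe_toNat hfinS
      rw [show (eR M S).toNat = 1 by exact_mod_cast hconn] at h2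
      exact h2.symm
    rw [hs1, add_comm]
    exact add_le_add_left (eR_mono M subset_union_right) 1
  · have hSQfin : eR M (S ∪ Q) ≠ ⊤ :=
      ne_top_of_le_ne_top (WithTop.add_ne_top.mpr ⟨hfinS, hQ⟩) (eR_union_le M S Q)
    have hSTfin : eR M (S ∪ T) ≠ ⊤ :=
      ne_top_of_le_ne_top (WithTop.add_ne_top.mpr ⟨hfinS, hfinT⟩) (eR_union_le M S T)
    have hconn' : eR M S + eR M Q = eR M (S ∪ Q) + 1 := by
      rw [mConn, mRk_eq_toNat, mRk_eq_toNat, mRk_eq_toNat] at hconn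
      lift eR M S to ℕ using hfinS with s
      lift eR M Q to ℕ using hQ with q
      lift eR M (S ∪ Q) to ℕ using hSQfin with u
      simp only [ENat.toNat_coe] at hconn
      have : s + q = u + 1 := by omega
      exact_mod_cast this
    have hsub := eR_submod M (S ∪ T) Q
    rw [show S ∪ T ∪ Q = S ∪ Q by
      rw [union_assoc, union_eq_self_of_subset_left hTQ]] at hsub
    have hint : eR M T ≤ eR M ((S ∪ T) ∩ Q) :=
      eR_mono M (subset_inter (subset_union_right.trans Subset.rfl) hTQ |>.trans Subset.rfl)
    lift eR M S to ℕ using hfinS with s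
    lift eR M T to ℕ using hfinT with t
    lift eR M Q to ℕ using hQ with q
    lift eR M (S ∪ Q) to ℕ using hSQfin with u
    lift eR M (S ∪ T) to ℕ using hSTfin with st
    have h1 : (u : ℕ∞) + t ≤ st + q := by
      calc (u : ℕ∞) + t ≤ (u : ℕ∞) + eR M ((S ∪ T) ∩ Q) := add_le_add_right hint _
        _ ≤ st + q := hsub
    have h2 : s + q = u + 1 := by exact_mod_cast hconn'
    have h1' : u + t ≤ st + q := by exact_mod_cast h1
    have h3 : s + t ≤ st + 1 := by omega
    exact_mod_cast h3

/-- Key step: propagate the attachment of `p` across a connectivity-1 relation. -/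
lemma attach_propagate {W : Matroid α} {p : α} {S T₀ T₁ : Set α}
    (hfS : eR W S ≠ ⊤) (hfT₀ : eR W T₀ ≠ ⊤) (hfT₁ : eR W T₁ ≠ ⊤)
    (hS : eR W (insert p S) = eR W S) (hT₀ : eR W (insert p T₀) = eR W T₀)
    (hCL : eR W S + eR W (T₀ ∪ T₁) ≤ eR W (S ∪ (T₀ ∪ T₁)) + 1)
    (h1 : eR W S + eR W T₁ = eR W (S ∪ T₁) + 1) :
    eR W (insert p T₁) = eR W T₁ := by
  refine le_antisymm ?_ (eR_mono W (subset_insert _ _))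
  have hsub := eR_submod W (insert p (S ∪ T₁)) (insert p (T₀ ∪ T₁))
  have hU : insert p (S ∪ T₁) ∪ insert p (T₀ ∪ T₁) = insert p (S ∪ (T₀ ∪ T₁)) := by
    ext x; simp; tauto
  have hIsub : insert p T₁ ⊆ insert p (S ∪ T₁) ∩ insert p (T₀ ∪ T₁) :=
    subset_inter (insert_subset_insert subset_union_right)
      (insert_subset_insert subset_union_right)
  rw [hU] at hsub
  have e1 : eR W (insert p (S ∪ T₁)) = eR W (S ∪ T₁) :=
    eR_insert_spread hfS hS subset_union_left
  have e2 : eR W (insert p (T₀ ∪ T₁)) = eR W (T₀ ∪ T₁) :=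
    eR_insert_spread hfT₀ hT₀ subset_union_left
  have hA : eR W (S ∪ (T₀ ∪ T₁)) + eR W (insert p T₁) ≤ eR W (S ∪ T₁) + eR W (T₀ ∪ T₁) := by
    calc eR W (S ∪ (T₀ ∪ T₁)) + eR W (insert p T₁)
        ≤ eR W (insert p (S ∪ (T₀ ∪ T₁))) +
            eR W (insert p (S ∪ T₁) ∩ insert p (T₀ ∪ T₁)) :=
          add_le_add (eR_mono W (subset_insert _ _)) (eR_mono W hIsub)
      _ ≤ eR W (insert p (S ∪ T₁)) + eR W (insert p (T₀ ∪ T₁)) := hsub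
      _ = eR W (S ∪ T₁) + eR W (T₀ ∪ T₁) := by rw [e1, e2]
  have hfST₁ : eR W (S ∪ T₁) ≠ ⊤ :=
    ne_top_of_le_ne_top (WithTop.add_ne_top.mpr ⟨hfS, hfT₁⟩) (eR_union_le W S T₁)
  have hfTT : eR W (T₀ ∪ T₁) ≠ ⊤ :=
    ne_top_of_le_ne_top (WithTop.add_ne_top.mpr ⟨hfT₀, hfT₁⟩) (eR_union_le W T₀ T₁)
  have hfBig : eR W (S ∪ (T₀ ∪ T₁)) ≠ ⊤ :=
    ne_top_of_le_ne_top (WithTop.add_ne_top.mpr ⟨hfS, hfTT⟩) (eR_union_le W S (T₀ ∪ T₁))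
  have hfp : eR W (insert p T₁) ≠ ⊤ := by
    intro h
    rw [h] at hA
    rw [add_top, top_le_iff] at hA
    exact (WithTop.add_ne_top.mpr ⟨hfST₁, hfTT⟩) hA
  lift eR W S to ℕ using hfS with s
  lift eR W T₁ to ℕ using hfT₁ with t₁
  lift eR W (S ∪ T₁) to ℕ using hfST₁ with st
  lift eR W (T₀ ∪ T₁) to ℕ using hfTT with tt
  lift eR W (S ∪ (T₀ ∪ T₁)) to ℕ using hfBig with big
  lift eR W (insert p T₁) to ℕ using hfp with pt
  have hA' : big + pt ≤ st + tt := by exact_mod_cast hA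
  have hCL' : s + tt ≤ big + 1 := by exact_mod_cast hCL
  have h1' : s + t₁ = st + 1 := by exact_mod_cast h1
  have hfin : pt ≤ t₁ := by omega
  exact_mod_cast hfin

/-- If `p` attaches to both sides, the local connectivity is (at least, hence exactly) one. -/
lemma attach_conn {W : Matroid α} {p : α} {S T : Set α}
    (hS : eR W (insert p S) = eR W S) (hT : eR W (insert p T) = eR W T)
    (hp : 1 ≤ eR W {p})
    (hCL : eR W S + eR W T ≤ eR W (S ∪ T) + 1) :
    eR W S + eR W T = eR W (S ∪ T) + 1 := by
  refine le_antisymm hCL ?_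
  have hsub := eR_submod W (insert p S) (insert p T)
  have hU : insert p S ∪ insert p T = insert p (S ∪ T) := by ext x; simp; tauto
  rw [hU] at hsub
  calc eR W (S ∪ T) + 1 ≤ eR W (insert p (S ∪ T)) + eR W (insert p S ∩ insert p T) := by
        refine add_le_add (eR_mono W (subset_insert _ _)) (le_trans hp (eR_mono W ?_))
        exact singleton_subset_iff.mpr ⟨mem_insert _ _, mem_insert _ _⟩
    _ ≤ eR W (insert p S) + eR W (insert p T) := hsub
    _ = eR W S + eR W T := by rw [hS, hT]

end AuxRank

/-- If `M` extends by `p` so that `A₀ ∪ {p}` and `B₀ ∪ {p}` are circuits, then there are no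
strands `A₁ ≠ A₀` and `B₁ ≠ B₀` with exactly two of the three cross local connectivities
equal to one. -/
theorem extension_forbids_vamos_pattern (M : Matroid α) (A B A₀ B₀ : Set α)
    (hsep : Exact3Sep M A B)
    (hA₀ : Strand M A B A₀) (hB₀ : Strand M B A B₀)
    (hconn : mConn M A₀ B₀ = 1)
    (hext : ∃ (M' : Matroid α) (p : α), ExtBy M' M p ∧
      mCircuit M' (insert p A₀) ∧ mCircuit M' (insert p B₀)) :
    ¬ ∃ A₁ B₁, Strand M A B A₁ ∧ Strand M B A B₁ ∧ A₁ ≠ A₀ ∧ B₁ ≠ B₀ ∧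
      ExactlyTwoOne (mConn M A₀ B₁) (mConn M A₁ B₀) (mConn M A₁ B₁) := by
  rintro ⟨A₁, B₁, hA₁, hB₁, -, -, hpat⟩
  obtain ⟨M', p, ⟨hpE, hgrd, hres⟩, hCA, hCB⟩ := hext
  have hAE : A ⊆ M.E := hsep.2.1 ▸ subset_union_left
  have hBE : B ⊆ M.E := hsep.2.1 ▸ subset_union_right
  have hA₀E : A₀ ⊆ M.E := hA₀.1.trans hAE
  have hB₀E : B₀ ⊆ M.E := hB₀.1.trans hBE
  have hA₁E : A₁ ⊆ M.E := hA₁.1.trans hAE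
  have hB₁E : B₁ ⊆ M.E := hB₁.1.trans hBE
  have hME : M.E ⊆ M'.E := by rw [hgrd]; exact subset_insert _ _
  have htr : ∀ X : Set α, X ⊆ M.E → eR M X = eR M' X := by
    intro X hX
    rw [← hres, eR_restrict M' hX]
  -- finiteness of the strands
  have fA₀ : eR M' A₀ ≠ ⊤ := by rw [← htr A₀ hA₀E]; exact strand_eR_ne_top hA₀ hA₀E
  have fB₀ : eR M' B₀ ≠ ⊤ := by rw [← htr B₀ hB₀E]; exact strand_eR_ne_top hB₀ hB₀E
  have fA₁ : eR M' A₁ ≠ ⊤ := by rw [← htr A₁ hA₁E]; exact strand_eR_ne_top hA₁ hA₁E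
  have fB₁ : eR M' B₁ ≠ ⊤ := by rw [← htr B₁ hB₁E]; exact strand_eR_ne_top hB₁ hB₁E
  have fAA : eR M' (A₀ ∪ A₁) ≠ ⊤ :=
    ne_top_of_le_ne_top (WithTop.add_ne_top.mpr ⟨fA₀, fA₁⟩) (eR_union_le M' A₀ A₁)
  have fBB : eR M' (B₀ ∪ B₁) ≠ ⊤ :=
    ne_top_of_le_ne_top (WithTop.add_ne_top.mpr ⟨fB₀, fB₁⟩) (eR_union_le M' B₀ B₁)
  -- facts coming from the two circuits through p
  have hpA₀mem : p ∉ A₀ := fun h => hpE (hA₀E h)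
  have hpB₀mem : p ∉ B₀ := fun h => hpE (hB₀E h)
  have hA₀i : M'.Indep A₀ := by
    by_contra hni
    exact hCA.2 A₀ (ssubset_insert hpA₀mem) ⟨hni, hA₀E.trans hME⟩
  have hB₀i : M'.Indep B₀ := by
    by_contra hni
    exact hCB.2 B₀ (ssubset_insert hpB₀mem) ⟨hni, hB₀E.trans hME⟩
  have hclA₀ : p ∈ M'.closure A₀ := ((hA₀i.insert_dep_iff).mp hCA.1).1
  have hclB₀ : p ∈ M'.closure B₀ := ((hB₀i.insert_dep_iff).mp hCB.1).1
  have hpA₀ : eR M' (insert p A₀) = eR M' A₀ := by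
    have hb : M'.IsBasis A₀ (insert p A₀) :=
      hA₀i.isBasis_of_subset_of_subset_closure (subset_insert _ _)
        (insert_subset hclA₀ (M'.subset_closure A₀ (hA₀E.trans hME)))
    rw [eR_basis' hb.isBasis', eR_indep hA₀i]
  have hpB₀ : eR M' (insert p B₀) = eR M' B₀ := by
    have hb : M'.IsBasis B₀ (insert p B₀) :=
      hB₀i.isBasis_of_subset_of_subset_closure (subset_insert _ _)
        (insert_subset hclB₀ (M'.subset_closure B₀ (hB₀E.trans hME)))
    rw [eR_basis' hb.isBasis', eR_indep hB₀i]
  -- p is not a loop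
  have hA₀ne : A₀.Nonempty := by
    rw [nonempty_iff_ne_empty]
    rintro rfl
    have h1 := hA₀.2.1
    rw [mConn_empty] at h1
    exact absurd h1 (by norm_num)
  have hp1 : 1 ≤ eR M' {p} := by
    obtain ⟨a, ha⟩ := hA₀ne
    have hss : {p} ⊂ insert p A₀ :=
      (ssubset_iff_of_subset (singleton_subset_iff.mpr (mem_insert _ _))).mpr
        ⟨a, mem_insert_of_mem _ ha,
          fun h => hpE ((mem_singleton_iff.mp h) ▸ hA₀E ha)⟩
    have hpi : M'.Indep {p} := by
      by_contra hni
      exact hCA.2 {p} hss ⟨hni, singleton_subset_iff.mpr (hgrd ▸ mem_insert _ _)⟩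
    rw [eR_indep hpi, encard_singleton]
  -- conversion between `mConn M · · = 1` and rank equations in `M'`
  have hconv : ∀ X Y : Set α, X ⊆ M.E → Y ⊆ M.E → eR M' X ≠ ⊤ → eR M' Y ≠ ⊤ →
      (mConn M X Y = 1 ↔ eR M' X + eR M' Y = eR M' (X ∪ Y) + 1) := by
    intro X Y hX hY h1 h2
    rw [mConn_eq_one_iff (by rwa [htr X hX]) (by rwa [htr Y hY]), htr X hX, htr Y hY,
      htr (X ∪ Y) (union_subset hX hY)]
  -- the four instances of the connectivity upper bound
  have hCLA₀ : ∀ T : Set α, T ⊆ B → eR M' T ≠ ⊤ →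
      eR M' A₀ + eR M' T ≤ eR M' (A₀ ∪ T) + 1 := by
    intro T hTB hfT
    rw [← htr A₀ hA₀E, ← htr T (hTB.trans hBE),
      ← htr (A₀ ∪ T) (union_subset hA₀E (hTB.trans hBE))]
    exact conn_le_of_strandconn (by rwa [htr A₀ hA₀E]) hA₀.2.1 hTB
      (by rwa [htr T (hTB.trans hBE)])
  have hCLA₁ : ∀ T : Set α, T ⊆ B → eR M' T ≠ ⊤ →
      eR M' A₁ + eR M' T ≤ eR M' (A₁ ∪ T) + 1 := by
    intro T hTB hfT
    rw [← htr A₁ hA₁E, ← htr T (hTB.trans hBE),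
      ← htr (A₁ ∪ T) (union_subset hA₁E (hTB.trans hBE))]
    exact conn_le_of_strandconn (by rwa [htr A₁ hA₁E]) hA₁.2.1 hTB
      (by rwa [htr T (hTB.trans hBE)])
  have hCLB₀ : ∀ T : Set α, T ⊆ A → eR M' T ≠ ⊤ →
      eR M' B₀ + eR M' T ≤ eR M' (B₀ ∪ T) + 1 := by
    intro T hTA hfT
    rw [← htr B₀ hB₀E, ← htr T (hTA.trans hAE),
      ← htr (B₀ ∪ T) (union_subset hB₀E (hTA.trans hAE))]
    exact conn_le_of_strandconn (by rwa [htr B₀ hB₀E]) hB₀.2.1 hTA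
      (by rwa [htr T (hTA.trans hAE)])
  have hCLB₁ : ∀ T : Set α, T ⊆ A → eR M' T ≠ ⊤ →
      eR M' B₁ + eR M' T ≤ eR M' (B₁ ∪ T) + 1 := by
    intro T hTA hfT
    rw [← htr B₁ hB₁E, ← htr T (hTA.trans hAE),
      ← htr (B₁ ∪ T) (union_subset hB₁E (hTA.trans hAE))]
    exact conn_le_of_strandconn (by rwa [htr B₁ hB₁E]) hB₁.2.1 hTA
      (by rwa [htr T (hTA.trans hAE)])
  -- the case analysis
  rcases hpat with ⟨ha, hb, hc⟩ | ⟨ha, hc, hb⟩ | ⟨hb, hc, ha⟩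
  · have ha' := (hconv A₀ B₁ hA₀E hB₁E fA₀ fB₁).mp ha
    have hb' := (hconv A₁ B₀ hA₁E hB₀E fA₁ fB₀).mp hb
    have hb'' : eR M' B₀ + eR M' A₁ = eR M' (B₀ ∪ A₁) + 1 := by
      rw [add_comm (eR M' B₀), union_comm B₀]; exact hb'
    have pB₁ := attach_propagate fA₀ fB₀ fB₁ hpA₀ hpB₀
      (hCLA₀ (B₀ ∪ B₁) (union_subset hB₀.1 hB₁.1) fBB) ha'
    have pA₁ := attach_propagate fB₀ fA₀ fA₁ hpB₀ hpA₀
      (hCLB₀ (A₀ ∪ A₁) (union_subset hA₀.1 hA₁.1) fAA) hb''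
    exact hc ((hconv A₁ B₁ hA₁E hB₁E fA₁ fB₁).mpr
      (attach_conn pA₁ pB₁ hp1 (hCLA₁ B₁ hB₁.1 fB₁)))
  · have ha' := (hconv A₀ B₁ hA₀E hB₁E fA₀ fB₁).mp ha
    have pB₁ := attach_propagate fA₀ fB₀ fB₁ hpA₀ hpB₀
      (hCLA₀ (B₀ ∪ B₁) (union_subset hB₀.1 hB₁.1) fBB) ha'
    have hc' := (hconv A₁ B₁ hA₁E hB₁E fA₁ fB₁).mp hc
    have hc'' : eR M' B₁ + eR M' A₁ = eR M' (B₁ ∪ A₁) + 1 := by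
      rw [add_comm (eR M' B₁), union_comm B₁]; exact hc'
    have pA₁ := attach_propagate fB₁ fA₀ fA₁ pB₁ hpA₀
      (hCLB₁ (A₀ ∪ A₁) (union_subset hA₀.1 hA₁.1) fAA) hc''
    exact hb ((hconv A₁ B₀ hA₁E hB₀E fA₁ fB₀).mpr
      (attach_conn pA₁ hpB₀ hp1 (hCLA₁ B₀ hB₀.1 fB₀)))
  · have hb' := (hconv A₁ B₀ hA₁E hB₀E fA₁ fB₀).mp hb
    have hb'' : eR M' B₀ + eR M' A₁ = eR M' (B₀ ∪ A₁) + 1 := by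
      rw [add_comm (eR M' B₀), union_comm B₀]; exact hb'
    have pA₁ := attach_propagate fB₀ fA₀ fA₁ hpB₀ hpA₀
      (hCLB₀ (A₀ ∪ A₁) (union_subset hA₀.1 hA₁.1) fAA) hb''
    have hc' := (hconv A₁ B₁ hA₁E hB₁E fA₁ fB₁).mp hc
    have pB₁ := attach_propagate fA₁ fB₀ fB₁ pA₁ hpB₀
      (hCLA₁ (B₀ ∪ B₁) (union_subset hB₀.1 hB₁.1) fBB) hc'
    exact ha ((hconv A₀ B₁ hA₀E hB₁E fA₀ fB₁).mpr
      (attach_conn hpA₀ pB₁ hp1 (hCLA₀ B₁ hB₁.1 fB₁)))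
end

section
/- Let (A, B) be an exact 3-separation of a matroid M, with A-strands A₀, A₁ and B-strands B₀, B₁. Suppose M has an extension by p in which A₀ ∪ {p}, B₀ ∪ {p}, A₁ ∪ {p}, and B₁ ∪ {p} are all circuits. Then all four sets A₀ ∪ B₀, A₀ ∪ B₁, A₁ ∪ B₀, and A₁ ∪ B₁ are circuits of M. -/
open Set

variable {α : Type*}

open Matroid hiding eRk eRk_mono eRk_empty

section Aux

variable {α : Type*} {M : Matroid α} {I J X Y D : Set α} {e : α}

noncomputable def eRk (M : Matroid α) (X : Set α) : ℕ∞ := (M.exists_isBasis' X).choose.encard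

lemma eRk_basis' (hI : M.IsBasis' I X) : eRk M X = I.encard :=
  (isBase_restrict_iff'.2 (M.exists_isBasis' X).choose_spec).encard_eq_encard_of_isBase
    (isBase_restrict_iff'.2 hI)

lemma indep_le_eRk (hJ : M.Indep J) (hJX : J ⊆ X) : J.encard ≤ eRk M X := by
  obtain ⟨I, hI, hJI⟩ := hJ.subset_isBasis'_of_subset hJX
  rw [eRk_basis' hI]; exact encard_mono hJI

lemma eRk_mono (M : Matroid α) (h : X ⊆ Y) : eRk M X ≤ eRk M Y := by
  obtain ⟨I, hI⟩ := M.exists_isBasis' X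
  rw [eRk_basis' hI]; exact indep_le_eRk hI.indep (hI.subset.trans h)

lemma eRk_indep (hI : M.Indep I) : eRk M I = I.encard :=
  eRk_basis' hI.isBasis_self.isBasis'

lemma indep_closure_le (hI : M.Indep I) (hJ : M.Indep J) (hJI : J ⊆ M.closure I) :
    J.encard ≤ I.encard := by
  obtain ⟨J', hJ', hJJ'⟩ := hJ.subset_isBasis_of_subset hJI (M.closure_subset_ground I)
  exact (encard_mono hJJ').trans
    (hJ'.restrict_isBase.encard_eq_encard_of_isBase hI.isBasis_closure.restrict_isBase).le

lemma eRk_eq_of_subset_closure (hXY : X ⊆ Y) (hY : Y ⊆ M.closure X) : eRk M X = eRk M Y := by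
  refine le_antisymm (eRk_mono M hXY) ?_
  obtain ⟨I, hI⟩ := M.exists_isBasis' X
  obtain ⟨J, hJ⟩ := M.exists_isBasis' Y
  rw [eRk_basis' hI, eRk_basis' hJ]
  exact indep_closure_le hI.indep hJ.indep
    (hJ.subset.trans (hY.trans_eq hI.closure_eq_closure.symm))

lemma eRk_insert_of_mem_closure (hX : X ⊆ M.E) (he : e ∈ M.closure X) :
    eRk M (insert e X) = eRk M X :=
  (eRk_eq_of_subset_closure (subset_insert e X)
    (insert_subset he (M.subset_closure X hX))).symm

lemma eRk_empty (M : Matroid α) : eRk M ∅ = 0 := by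
  rw [eRk_indep M.empty_indep, encard_empty]

lemma eRk_dep_add_one_le (hD : M.Dep D) : eRk M D + 1 ≤ D.encard := by
  obtain ⟨I, hI⟩ := M.exists_isBasis' D
  have hne : I ≠ D := fun h ↦ hD.1 (h ▸ hI.indep)
  rw [eRk_basis' hI]
  rcases D.finite_or_infinite with hfin | hinf
  · exact Order.add_one_le_of_lt ((hfin.subset hI.subset).encard_lt_encard ⟨hI.subset, fun h ↦ hne
      (hI.subset.antisymm h)⟩)
  · rw [hinf.encard_eq]; exact le_top

lemma eRk_submod (M : Matroid α) (X Y : Set α) :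
    eRk M (X ∪ Y) + eRk M (X ∩ Y) ≤ eRk M X + eRk M Y := by
  obtain ⟨I, hI⟩ := M.exists_isBasis' (X ∩ Y)
  obtain ⟨J, hJ, hIJ⟩ := hI.indep.subset_isBasis'_of_subset
    (hI.subset.trans (inter_subset_left.trans subset_union_left))
  rw [eRk_basis' hJ, eRk_basis' hI]
  have h1 : (J ∩ X).encard ≤ eRk M X := indep_le_eRk (hJ.indep.subset inter_subset_left)
    inter_subset_right
  have h2 : (J ∩ Y).encard ≤ eRk M Y := indep_le_eRk (hJ.indep.subset inter_subset_left)
    inter_subset_right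
  have h3 : J.encard + I.encard ≤ (J ∩ X).encard + (J ∩ Y).encard := by
    have h4 := encard_union_add_encard_inter (J ∩ X) (J ∩ Y)
    have h5 : (J ∩ X) ∪ (J ∩ Y) = J := by
      rw [← inter_union_distrib_left, inter_eq_self_of_subset_left hJ.subset]
    have h6 : I.encard ≤ ((J ∩ X) ∩ (J ∩ Y)).encard := by
      refine encard_mono fun x hx ↦ ?_
      have hxJ := hIJ hx
      have hxXY := hI.subset hx
      exact ⟨⟨hxJ, hxXY.1⟩, hxJ, hxXY.2⟩
    calc J.encard + I.encard ≤ J.encard + ((J ∩ X) ∩ (J ∩ Y)).encard := by gcongr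
      _ = ((J ∩ X) ∪ (J ∩ Y)).encard + ((J ∩ X) ∩ (J ∩ Y)).encard := by rw [h5]
      _ = (J ∩ X).encard + (J ∩ Y).encard := h4
  exact h3.trans (add_le_add h1 h2)

lemma eRk_union_le (M : Matroid α) (X Y : Set α) : eRk M (X ∪ Y) ≤ eRk M X + eRk M Y :=
  le_trans (le_add_right le_rfl) (eRk_submod M X Y)

lemma eRk_restrict {R : Set α} (hX : X ⊆ R) : eRk (M ↾ R) X = eRk M X := by
  obtain ⟨I, hI⟩ := M.exists_isBasis' X
  rw [eRk_basis' hI, eRk_basis' (X := X) (M := M ↾ R) (isBasis'_restrict_iff.2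
    ⟨by rwa [inter_eq_self_of_subset_left hX], hI.subset.trans hX⟩)]


lemma mRk_eq (M : Matroid α) (X : Set α) : mRk M X = (eRk M X).toNat := by
  obtain ⟨I, hI⟩ := M.exists_isBasis' X
  rw [eRk_basis' hI]
  rcases I.finite_or_infinite with hfin | hinf
  · have hub : ∀ n ∈ Set.ncard '' {J | M.Indep J ∧ J ⊆ X}, n ≤ I.ncard := by
      rintro n ⟨J, ⟨hJi, hJX⟩, rfl⟩
      have hle : J.encard ≤ I.encard := (indep_le_eRk hJi hJX).trans_eq (eRk_basis' hI)
      rw [ncard_def, ncard_def]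
      exact ENat.toNat_le_toNat hle (by simpa using hfin)
    have hmem : I.ncard ∈ Set.ncard '' {J | M.Indep J ∧ J ⊆ X} :=
      ⟨I, ⟨hI.indep, hI.subset⟩, rfl⟩
    rw [mRk, le_antisymm (csSup_le ⟨_, hmem⟩ hub) (le_csSup ⟨I.ncard, hub⟩ hmem), ncard_def]
  · rw [hinf.encard_eq, ENat.toNat_top, mRk]
    rw [csSup_of_not_bddAbove, csSup_empty]
    · rfl
    rintro ⟨ub, hub⟩
    obtain ⟨J, hJI, hJfin, hJcard⟩ := hinf.exists_subset_ncard_eq (ub + 1)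
    have : ub + 1 ≤ ub := hub ⟨J, ⟨hI.indep.subset hJI, hJI.trans hI.subset⟩, hJcard⟩
    omega

lemma mConn_eq (M : Matroid α) (S T : Set α) : mConn M S T =
    ((eRk M S).toNat : ℤ) + ((eRk M T).toNat : ℤ) - ((eRk M (S ∪ T)).toNat : ℤ) := by
  rw [mConn, mRk_eq, mRk_eq, mRk_eq]

lemma ExtBy.indep_iff' (hext : ExtBy M' M p) (hXE : X ⊆ M.E) : M.Indep X ↔ M'.Indep X := by
  rw [← hext.2.2]; simp [restrict_indep_iff, hXE]

lemma ExtBy.eRk_eq' (hext : ExtBy M' M p) (hXE : X ⊆ M.E) : eRk M X = eRk M' X := by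
  conv_lhs => rw [← hext.2.2]
  exact eRk_restrict hXE

lemma ExtBy.ground_subset (hext : ExtBy M' M p) : M.E ⊆ M'.E := by
  rw [hext.2.1]; exact subset_insert _ _

lemma mCircuit.ssubset_indep (hC : mCircuit M' C) (hX : X ⊂ C) : M'.Indep X :=
  (not_dep_iff (hX.subset.trans hC.1.subset_ground)).1 (hC.2 X hX)

lemma mCircuit.mem_closure (hC : mCircuit M' C) (hx : x ∈ C) :
    x ∈ M'.closure (C \ {x}) := by
  have hI : M'.Indep (C \ {x}) := hC.ssubset_indep (sdiff_singleton_ssubset.2 hx)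
  have hD : M'.Dep (insert x (C \ {x})) := by
    rw [insert_diff_singleton, insert_eq_of_mem hx]; exact hC.1
  exact (hI.insert_dep_iff.1 hD).1

/-- p is in the closure of S when insert p S is a circuit and p ∉ S. -/
lemma mCircuit.p_mem_closure (hC : mCircuit M' (insert p S)) (hp : p ∉ S) :
    p ∈ M'.closure S := by
  have := hC.mem_closure (mem_insert p S)
  rwa [insert_sdiff_of_mem _ (mem_singleton p), diff_singleton_eq_self hp] at this

-- strand lemmas
lemma strand_indep (hSE : S ⊆ M.E) (hBE : B ⊆ M.E)
    (hmin : ∀ S', S' ⊂ S → mConn M S' B ≠ 1) (hconn : mConn M S B = 1) : M.Indep S := by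
  by_contra h
  obtain ⟨I, hI⟩ := M.exists_isBasis' S
  have hne : I ≠ S := fun hIS ↦ h (hIS ▸ hI.indep)
  obtain ⟨e, heS, heI⟩ := exists_of_ssubset (hI.subset.ssubset_of_ne hne)
  have hecl : e ∈ M.closure (S \ {e}) := by
    have h1 : e ∈ M.closure I := by
      rw [hI.closure_eq_closure]
      exact M.subset_closure S hSE heS
    exact M.closure_subset_closure (subset_diff_singleton hI.subset heI) h1
  have h1 : eRk M (S \ {e}) = eRk M S := by
    refine eRk_eq_of_subset_closure diff_subset fun x hx ↦ ?_
    rcases eq_or_ne x e with rfl | hxe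
    · exact hecl
    · exact M.subset_closure _ (diff_subset.trans hSE) ⟨hx, hxe⟩
  have h2 : eRk M ((S \ {e}) ∪ B) = eRk M (S ∪ B) := by
    refine eRk_eq_of_subset_closure (union_subset_union_left B diff_subset) fun x hx ↦ ?_
    have hsub : S \ {e} ∪ B ⊆ M.closure (S \ {e} ∪ B) :=
      M.subset_closure _ (union_subset (diff_subset.trans hSE) hBE)
    rcases hx with hxS | hxB
    · rcases eq_or_ne x e with rfl | hxe
      · exact M.closure_subset_closure subset_union_left hecl
      · exact hsub (Or.inl ⟨hxS, hxe⟩)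
    · exact hsub (Or.inr hxB)
  refine hmin (S \ {e}) (sdiff_singleton_ssubset.2 heS) ?_
  rw [mConn_eq, h1, h2, ← mConn_eq, hconn]

lemma strand_nonempty (hconn : mConn M S B = 1) : S.Nonempty := by
  rcases S.eq_empty_or_nonempty with rfl | h
  · rw [mConn_eq, eRk_empty, empty_union] at hconn
    simp at hconn
  · exact h

lemma strand_finite (hSE : S ⊆ M.E) (hBE : B ⊆ M.E)
    (hmin : ∀ S', S' ⊂ S → mConn M S' B ≠ 1) (hconn : mConn M S B = 1)
    (hSi : M.Indep S) : S.Finite := by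
  by_contra hfin
  have hinf : S.Infinite := hfin
  obtain ⟨s, hs⟩ := hinf.nonempty
  have htop : eRk M S = ⊤ := by rw [eRk_indep hSi, hinf.encard_eq]
  have htop2 : eRk M (S ∪ B) = ⊤ :=
    top_le_iff.1 (htop ▸ eRk_mono M subset_union_left)
  rw [mConn_eq, htop, htop2] at hconn
  simp only [ENat.toNat_top, Nat.cast_zero, zero_add, sub_zero] at hconn
  have hinf' : (S \ {s}).Infinite := hinf.diff (finite_singleton s)
  refine hmin (S \ {s}) (sdiff_singleton_ssubset.2 hs) ?_
  have htop3 : eRk M (S \ {s}) = ⊤ := by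
    rw [eRk_indep (hSi.subset diff_subset), hinf'.encard_eq]
  have htop4 : eRk M (S \ {s} ∪ B) = ⊤ :=
    top_le_iff.1 (htop3 ▸ eRk_mono M subset_union_left)
  rw [mConn_eq, htop3, htop4]
  simp only [ENat.toNat_top, Nat.cast_zero, zero_add, sub_zero]
  exact hconn

lemma strand_union_dep (hext : ExtBy M' M p) (hSE : S ⊆ M.E) (hTE : T ⊆ M.E)
    (hdisj : Disjoint S T) (hSne : S.Nonempty)
    (hCS : mCircuit M' (insert p S)) (hCT : mCircuit M' (insert p T)) :
    M.Dep (S ∪ T) := by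
  rw [dep_iff]
  refine ⟨fun hind ↦ ?_, union_subset hSE hTE⟩
  obtain ⟨s, hs⟩ := hSne
  have hind' : M'.Indep (S ∪ T) := (hext.indep_iff' (union_subset hSE hTE)).1 hind
  have hps : p ≠ s := fun h ↦ hext.1 (h ▸ hSE hs)
  have h1 : s ∈ M'.closure (insert p (S \ {s})) := by
    have h := hCS.mem_closure (mem_insert_of_mem _ hs)
    rwa [insert_sdiff_of_notMem _ (by simpa using hps)] at h
  have hpclT : p ∈ M'.closure T := hCT.p_mem_closure fun h ↦ hext.1 (hTE h)
  have hSTE' : S \ {s} ∪ T ⊆ M'.E :=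
    (union_subset (diff_subset.trans hSE) hTE).trans hext.ground_subset
  have hsub : insert p (S \ {s}) ⊆ M'.closure (S \ {s} ∪ T) := by
    refine insert_subset (M'.closure_subset_closure subset_union_right hpclT) ?_
    exact subset_union_left.trans (M'.subset_closure _ hSTE')
  have h2 : s ∈ M'.closure (S \ {s} ∪ T) :=
    M'.closure_subset_closure_of_subset_closure hsub h1
  have h3 : (S ∪ T) \ {s} = S \ {s} ∪ T := by
    rw [union_diff_distrib, diff_singleton_eq_self (disjoint_left.1 hdisj hs)]
  exact hind'.notMem_closure_sdiff_of_mem (mem_union_left _ hs) (h3 ▸ h2)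

lemma key (hext : ExtBy M' M p) (hSE : S ⊆ M.E) (hBE : B ⊆ M.E) (hTB : T ⊆ B)
    (hconn : mConn M S B = 1) (hmin : ∀ S', S' ⊂ S → mConn M S' B ≠ 1)
    (hSi : M.Indep S) (hSfin : S.Finite) (hTi : M.Indep T) (hTfin : T.Finite)
    (hCT : mCircuit M' (insert p T))
    (hs : s ∈ S) : M.Indep (S \ {s} ∪ T) := by
  by_contra hdep
  have hTE : T ⊆ M.E := hTB.trans hBE
  -- if S = {s} then S \ {s} ∪ T = T is independent
  have hSne2 : ∃ t ∈ S, t ≠ s := by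
    by_contra hno
    push_neg at hno
    have hS1 : S = {s} := (subset_singleton_iff.2 hno).antisymm (singleton_subset_iff.2 hs)
    exact hdep (by rw [hS1, diff_self, empty_union]; exact hTi)
  have hBE' : B ⊆ M'.E := hBE.trans hext.ground_subset
  set D := S \ {s} ∪ T with hD
  have hDE : D ⊆ M.E := union_subset (diff_subset.trans hSE) hTE
  have hDE' : D ⊆ M'.E := hDE.trans hext.ground_subset
  have hDdep : M'.Dep D := ⟨fun h ↦ hdep ((hext.indep_iff' hDE).2 h), hDE'⟩
  have hTi' : M'.Indep T := (hext.indep_iff' hTE).1 hTi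
  have hpclT : p ∈ M'.closure T := hCT.p_mem_closure fun h ↦ hext.1 (hTE h)
  have hpclB : p ∈ M'.closure B := M'.closure_subset_closure hTB hpclT
  have hpclD : p ∈ M'.closure D := M'.closure_subset_closure subset_union_right hpclT
  have h5 : eRk M' D + 1 ≤ (S \ {s}).encard + T.encard :=
    (eRk_dep_add_one_le hDdep).trans (encard_union_le _ _)
  have h6 : eRk M' (insert p D) = eRk M' D := eRk_insert_of_mem_closure hDE' hpclD
  have hUV : insert p D ∪ insert p B = insert p (S \ {s} ∪ B) := by
    rw [insert_union, union_insert, insert_idem, hD, union_assoc,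
      union_eq_self_of_subset_left hTB]
  have h7 : eRk M' (insert p (S \ {s} ∪ B)) + eRk M' (insert p D ∩ insert p B) ≤
      eRk M' (insert p D) + eRk M' (insert p B) := by
    rw [← hUV]; exact eRk_submod M' _ _
  have h8 : eRk M' (insert p T) ≤ eRk M' (insert p D ∩ insert p B) :=
    eRk_mono M' (subset_inter (insert_subset_insert subset_union_right)
      (insert_subset_insert hTB))
  have h9 : eRk M' (insert p T) = T.encard := by
    rw [eRk_insert_of_mem_closure (hTE.trans hext.ground_subset) hpclT, eRk_indep hTi']
  have hc1 : eRk M' (insert p (S \ {s} ∪ B)) = eRk M (S \ {s} ∪ B) := by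
    rw [eRk_insert_of_mem_closure
      (union_subset ((diff_subset.trans hSE).trans hext.ground_subset) hBE')
      (M'.closure_subset_closure subset_union_right hpclB)]
    exact (hext.eRk_eq' (union_subset (diff_subset.trans hSE) hBE)).symm
  have hc2 : eRk M' (insert p B) = eRk M B := by
    rw [eRk_insert_of_mem_closure hBE' hpclB]
    exact (hext.eRk_eq' hBE).symm
  have hstar : eRk M (S \ {s} ∪ B) + T.encard + 1 ≤
      (S \ {s}).encard + T.encard + eRk M B := by
    calc eRk M (S \ {s} ∪ B) + T.encard + 1
        ≤ eRk M' (insert p D) + eRk M' (insert p B) + 1 := by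
          rw [← hc1]
          exact add_le_add (le_trans (add_le_add le_rfl (h9 ▸ h8)) h7) le_rfl
      _ = (eRk M' D + 1) + eRk M B := by rw [h6, hc2]; ring
      _ ≤ ((S \ {s}).encard + T.encard) + eRk M B := add_le_add h5 le_rfl
      _ = (S \ {s}).encard + T.encard + eRk M B := rfl
  obtain ⟨t, ht, hts⟩ := hSne2
  have hkS : S.encard = (S.ncard : ℕ∞) := by rw [ncard_def]; exact hSfin.encard_eq_coe
  set k := S.ncard with hkdef
  have hk2 : 2 ≤ k := by
    have h1 : 1 < S.ncard := (Set.one_lt_ncard_iff hSfin).2 ⟨t, s, ht, hs, hts⟩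
    omega
  have hmT : T.encard = (T.ncard : ℕ∞) := by rw [ncard_def]; exact hTfin.encard_eq_coe
  set m := T.ncard with hmdef
  have hu : (S \ {s}).encard = ((k - 1 : ℕ) : ℕ∞) := by
    have h := encard_diff_singleton_add_one hs
    rw [hkS] at h
    have hfin : (S \ {s}).Finite := hSfin.diff
    have he : (S \ {s}).encard = ((S \ {s}).ncard : ℕ∞) := by
      rw [ncard_def]; exact hfin.encard_eq_coe
    rw [he] at h ⊢
    have : (S \ {s}).ncard + 1 = k := by exact_mod_cast h
    exact_mod_cast congrArg Nat.cast (by omega : (S \ {s}).ncard = k - 1)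
  rcases eq_or_ne (eRk M B) ⊤ with hb | hb
  · -- B has infinite rank: then mConn S B = k forces k = 1, contradiction
    have hSBtop : eRk M (S ∪ B) = ⊤ := top_le_iff.1 (hb ▸ eRk_mono M subset_union_right)
    rw [mConn_eq, hb, hSBtop, eRk_indep hSi, hkS] at hconn
    simp only [ENat.toNat_top, ENat.toNat_coe, Nat.cast_zero, add_zero, sub_zero] at hconn
    have : k = 1 := by exact_mod_cast hconn
    omega
  · set n := (eRk M B).toNat with hndef
    have hbn : eRk M B = (n : ℕ∞) := (ENat.coe_toNat hb).symm
    have hSBle : eRk M (S ∪ B) ≤ ((k + n : ℕ) : ℕ∞) := by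
      calc eRk M (S ∪ B) ≤ eRk M S + eRk M B := eRk_union_le M S B
        _ = ((k + n : ℕ) : ℕ∞) := by rw [eRk_indep hSi, hkS, hbn]; push_cast; rfl
    have hSBne : eRk M (S ∪ B) ≠ ⊤ := by
      intro h; rw [h, top_le_iff] at hSBle
      exact (ENat.coe_ne_top _) hSBle
    set w := (eRk M (S ∪ B)).toNat with hwdef
    have hwSB : eRk M (S ∪ B) = (w : ℕ∞) := (ENat.coe_toNat hSBne).symm
    rw [mConn_eq, eRk_indep hSi, hkS, hbn, hwSB] at hconn
    simp only [ENat.toNat_coe] at hconn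
    -- hconn : (k : ℤ) + n - w = 1
    have h11 : eRk M (S ∪ B) + (S \ {s}).encard ≤ eRk M S + eRk M (S \ {s} ∪ B) := by
      have hUV2 : S ∪ (S \ {s} ∪ B) = S ∪ B := by
        rw [← union_assoc, union_eq_self_of_subset_right diff_subset]
      have hsub : S \ {s} ⊆ S ∩ (S \ {s} ∪ B) := subset_inter diff_subset subset_union_left
      calc eRk M (S ∪ B) + (S \ {s}).encard
          = eRk M (S ∪ (S \ {s} ∪ B)) + (S \ {s}).encard := by rw [hUV2]
        _ ≤ eRk M (S ∪ (S \ {s} ∪ B)) + eRk M (S ∩ (S \ {s} ∪ B)) := by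
            exact add_le_add le_rfl ((eRk_indep (hSi.subset diff_subset)) ▸ eRk_mono M hsub)
        _ ≤ eRk M S + eRk M (S \ {s} ∪ B) := eRk_submod M _ _
    have hcne : eRk M (S \ {s} ∪ B) ≠ ⊤ := by
      intro h
      have := h ▸ eRk_mono M (union_subset_union_left B diff_subset)
      exact hSBne (top_le_iff.1 this)
    set c := (eRk M (S \ {s} ∪ B)).toNat with hcdef
    have hcc : eRk M (S \ {s} ∪ B) = (c : ℕ∞) := (ENat.coe_toNat hcne).symm
    have hN1 : w + (k - 1) ≤ k + c := by
      have h12 := h11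
      rw [hwSB, hu, eRk_indep hSi, hkS, hcc] at h12
      exact_mod_cast h12
    have hN2 : c + m + 1 ≤ (k - 1) + m + n := by
      have h13 := hstar
      rw [hcc, hmT, hu, hbn] at h13
      exact_mod_cast h13
    refine hmin (S \ {s}) (sdiff_singleton_ssubset.2 hs) ?_
    rw [mConn_eq, eRk_indep (hSi.subset diff_subset), hu, hbn, hcc]
    simp only [ENat.toNat_coe]
    omega


lemma strand_package {M : Matroid α} {A B S : Set α} (hAE : A ⊆ M.E) (hBE : B ⊆ M.E)
    (hS : Strand M A B S) : M.Indep S ∧ S.Finite ∧ S.Nonempty := by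
  obtain ⟨hSA, hconn, hmin⟩ := hS
  have hSE := hSA.trans hAE
  have hi := strand_indep hSE hBE hmin hconn
  exact ⟨hi, strand_finite hSE hBE hmin hconn hi, strand_nonempty hconn⟩

lemma pair_circuit {M M' : Matroid α} {p : α} {A B S T : Set α}
    (hext : ExtBy M' M p) (hAE : A ⊆ M.E) (hBE : B ⊆ M.E)
    (hdisj : Disjoint A B) (hS : Strand M A B S) (hT : Strand M B A T)
    (hCS : mCircuit M' (insert p S)) (hCT : mCircuit M' (insert p T)) :
    mCircuit M (S ∪ T) := by
  obtain ⟨hSi, hSfin, hSne⟩ := strand_package hAE hBE hS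
  obtain ⟨hTi, hTfin, hTne⟩ := strand_package hBE hAE hT
  have hSE := hS.1.trans hAE
  have hTE := hT.1.trans hBE
  have hdisjST : Disjoint S T := hdisj.mono hS.1 hT.1
  refine ⟨strand_union_dep hext hSE hTE hdisjST hSne hCS hCT, fun D hDsub hDdep ↦ ?_⟩
  obtain ⟨x, hxST, hxD⟩ := exists_of_ssubset hDsub
  have hind : M.Indep D := by
    rcases hxST with hxS | hxT
    · have h := key hext hSE hBE hT.1 hS.2.1 hS.2.2 hSi hSfin hTi hTfin hCT hxS
      refine h.subset fun y hy ↦ ?_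
      rcases hDsub.subset hy with h1 | h2
      · exact Or.inl ⟨h1, fun he ↦ hxD (mem_singleton_iff.1 he ▸ hy)⟩
      · exact Or.inr h2
    · have h := key hext hTE hAE hS.1 hT.2.1 hT.2.2 hTi hTfin hSi hSfin hCS hxT
      refine h.subset fun y hy ↦ ?_
      rcases hDsub.subset hy with h1 | h2
      · exact Or.inr h1
      · exact Or.inl ⟨h2, fun he ↦ hxD (mem_singleton_iff.1 he ▸ hy)⟩
  exact hDdep.1 hind

end Aux

/-- If `M` extends by `p` so that `A₀ ∪ {p}`, `B₀ ∪ {p}`, `A₁ ∪ {p}` and `B₁ ∪ {p}` are all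
circuits, then all four strand unions are circuits of `M`. -/
theorem four_circuits (M : Matroid α) (A B A₀ A₁ B₀ B₁ : Set α)
    (hsep : Exact3Sep M A B)
    (hA₀ : Strand M A B A₀) (hA₁ : Strand M A B A₁)
    (hB₀ : Strand M B A B₀) (hB₁ : Strand M B A B₁)
    (hext : ∃ (M' : Matroid α) (p : α), ExtBy M' M p ∧
      mCircuit M' (insert p A₀) ∧ mCircuit M' (insert p B₀) ∧
      mCircuit M' (insert p A₁) ∧ mCircuit M' (insert p B₁)) :
    mCircuit M (A₀ ∪ B₀) ∧ mCircuit M (A₀ ∪ B₁) ∧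
      mCircuit M (A₁ ∪ B₀) ∧ mCircuit M (A₁ ∪ B₁) := by
  obtain ⟨hdisj, hUnion, _⟩ := hsep
  obtain ⟨M', p, hext, hC0, hD0, hC1, hD1⟩ := hext
  have hAE : A ⊆ M.E := hUnion ▸ subset_union_left
  have hBE : B ⊆ M.E := hUnion ▸ subset_union_right
  exact ⟨pair_circuit hext hAE hBE hdisj hA₀ hB₀ hC0 hD0,
    pair_circuit hext hAE hBE hdisj hA₀ hB₁ hC0 hD1,
    pair_circuit hext hAE hBE hdisj hA₁ hB₀ hC1 hD0,
    pair_circuit hext hAE hBE hdisj hA₁ hB₁ hC1 hD1⟩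
end

section
/- In the setting of an exact 3-separation (A, B) with a freely added guts line L: if A′ ⊆ A and B′ ⊆ B satisfy ⊓(A′ ∪ B′, L) = 1 = ⊓(B′, L), and A′ contains a special strand, then B′ also contains a special strand (where special strands are those lying in the component of the strand graph containing a fixed pair A₀, B₀ with ⊓(A₀, B₀) = 1). -/
open Set

variable {α : Type*}

namespace Matroid

noncomputable def erk' (M : Matroid α) (X : Set α) : ℕ∞ :=
  ⨆ I ∈ {I | M.Indep I ∧ I ⊆ X}, I.encard

variable {M : Matroid α} {I J X Y Z R : Set α}

lemma encard_le_erk' (hI : M.Indep I) (hIX : I ⊆ X) : I.encard ≤ M.erk' X :=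
  le_biSup _ ⟨hI, hIX⟩

lemma erk'_le {c : ℕ∞} (h : ∀ I, M.Indep I → I ⊆ X → I.encard ≤ c) : M.erk' X ≤ c :=
  iSup₂_le fun I hI => h I hI.1 hI.2

lemma IsBasis'.erk'_eq (hI : M.IsBasis' I X) : M.erk' X = I.encard := by
  refine le_antisymm (erk'_le fun J hJ hJX => ?_) (encard_le_erk' hI.indep hI.subset)
  obtain ⟨K, hK, hJK⟩ := hJ.subset_isBasis'_of_subset hJX
  rw [hI.encard_eq_encard hK]
  exact encard_mono hJK

lemma erk'_mono (h : X ⊆ Y) : M.erk' X ≤ M.erk' Y :=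
  erk'_le fun _ hI hIX => encard_le_erk' hI (hIX.trans h)

lemma erk'_closure (M : Matroid α) (X : Set α) : M.erk' (M.closure X) = M.erk' X := by
  obtain ⟨I, hI⟩ := M.exists_isBasis' X
  rw [hI.erk'_eq, (hI.isBasis_closure_right.isBasis').erk'_eq]

lemma erk'_congr (h : M.closure X = M.closure Y) : M.erk' X = M.erk' Y := by
  rw [← erk'_closure M X, h, erk'_closure]

lemma erk'_le_encard (M : Matroid α) (X : Set α) : M.erk' X ≤ X.encard :=
  erk'_le fun _ _ h => encard_mono h

lemma Indep.erk'_eq (hI : M.Indep I) : M.erk' I = I.encard :=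
  le_antisymm (erk'_le_encard M I) (encard_le_erk' hI Subset.rfl)

lemma erk'_union_le (M : Matroid α) (X Y : Set α) :
    M.erk' (X ∪ Y) ≤ M.erk' X + M.erk' Y := by
  obtain ⟨I, hI⟩ := M.exists_isBasis' (X ∪ Y)
  rw [hI.erk'_eq]
  calc I.encard = ((I ∩ X) ∪ (I ∩ Y)).encard := by
        rw [← inter_union_distrib_left, inter_eq_self_of_subset_left hI.subset]
    _ ≤ (I ∩ X).encard + (I ∩ Y).encard := encard_union_le _ _
    _ ≤ _ := add_le_add (encard_le_erk' (hI.indep.subset inter_subset_left) inter_subset_right)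
          (encard_le_erk' (hI.indep.subset inter_subset_left) inter_subset_right)

lemma erk'_submod (M : Matroid α) (X Y : Set α) :
    M.erk' (X ∩ Y) + M.erk' (X ∪ Y) ≤ M.erk' X + M.erk' Y := by
  obtain ⟨I, hI⟩ := M.exists_isBasis' (X ∩ Y)
  obtain ⟨J, hJ, hIJ⟩ := hI.indep.subset_isBasis'_of_subset
    (hI.subset.trans (inter_subset_left.trans subset_union_left))
  rw [hI.erk'_eq, hJ.erk'_eq]
  have h1 : (J ∩ X) ∪ (J ∩ Y) = J := by
    rw [← inter_union_distrib_left, inter_eq_self_of_subset_left hJ.subset]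
  have h2 : (J ∩ X) ∩ (J ∩ Y) = J ∩ (X ∩ Y) := by ext a; simp; tauto
  have h3 := encard_union_add_encard_inter (J ∩ X) (J ∩ Y)
  rw [h1, h2] at h3
  have hIle : I.encard ≤ (J ∩ (X ∩ Y)).encard :=
    encard_mono (subset_inter hIJ hI.subset)
  calc I.encard + J.encard ≤ (J ∩ (X ∩ Y)).encard + J.encard := add_le_add_left hIle _
    _ = (J ∩ X).encard + (J ∩ Y).encard := by rw [← h3, add_comm]
    _ ≤ _ := add_le_add (encard_le_erk' (hJ.indep.subset inter_subset_left) inter_subset_right)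
          (encard_le_erk' (hJ.indep.subset inter_subset_left) inter_subset_right)

lemma erk'_swap (h : X ⊆ Z) (Y : Set α) :
    M.erk' X + M.erk' (Z ∪ Y) ≤ M.erk' Z + M.erk' (X ∪ Y) := by
  have hs := M.erk'_submod Z (X ∪ Y)
  have h1 : Z ∪ (X ∪ Y) = Z ∪ Y := by
    rw [← union_assoc, union_eq_self_of_subset_right h]
  rw [h1] at hs
  exact le_trans (add_le_add_left (erk'_mono (subset_inter h subset_union_left)) _) hs

lemma mRk_eq_toNat_erk' (M : Matroid α) (X : Set α) : mRk M X = (M.erk' X).toNat := by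
  obtain ⟨I, hI⟩ := M.exists_isBasis' X
  rcases eq_or_ne (M.erk' X) ⊤ with htop | hfin
  · have hIinf : I.Infinite := by
      rw [hI.erk'_eq, encard_eq_top_iff] at htop; exact htop
    have hnb : ¬ BddAbove (Set.ncard '' {J | M.Indep J ∧ J ⊆ X}) := by
      rintro ⟨n, hn⟩
      obtain ⟨J, hJs, hJfin, hJcard⟩ := hIinf.exists_subset_ncard_eq (n + 1)
      have := hn (Set.mem_image_of_mem _
        (⟨hI.indep.subset hJs, hJs.trans hI.subset⟩ : _ ∈ {J | M.Indep J ∧ J ⊆ X}))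
      omega
    rw [mRk, csSup_of_not_bddAbove hnb, csSup_empty, htop]
    rfl
  · have htn : (M.erk' X).toNat = I.ncard := by rw [hI.erk'_eq, ncard_def]
    have hub : ∀ n ∈ Set.ncard '' {J | M.Indep J ∧ J ⊆ X}, n ≤ I.ncard := by
      rintro n ⟨J, ⟨hJind, hJX⟩, rfl⟩
      have hJ : J.encard ≤ I.encard := by
        rw [← hI.erk'_eq]; exact encard_le_erk' hJind hJX
      rw [ncard_def, ncard_def]
      exact ENat.toNat_le_toNat hJ (by rwa [hI.erk'_eq] at hfin)
    rw [htn, mRk]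
    refine le_antisymm (csSup_le ⟨0, ⟨∅, ⟨M.empty_indep, empty_subset X⟩, by simp⟩⟩ hub) ?_
    exact le_csSup ⟨I.ncard, hub⟩ (Set.mem_image_of_mem _ ⟨hI.indep, hI.subset⟩)

lemma erk'_restrict (M : Matroid α) (h : Z ⊆ R) : (M.restrict R).erk' Z = M.erk' Z := by
  refine le_antisymm (erk'_le fun I hI hIZ => encard_le_erk' hI.of_restrict hIZ)
    (erk'_le fun I hI hIZ => encard_le_erk' ?_ hIZ)
  exact hI.indep_restrict_of_subset (hIZ.trans h)

lemma erk'_eq_of_subset_closure {N : Matroid α} (h1 : X ⊆ Z) (h2 : Z ⊆ N.closure X) :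
    N.erk' Z = N.erk' X :=
  le_antisymm (le_of_le_of_eq (erk'_mono h2) (erk'_closure N X)) (erk'_mono h1)

lemma erk'_union_absorb {N : Matroid α} (hXE : X ⊆ N.E) (h : Y ⊆ N.closure X) :
    N.erk' (X ∪ Y) = N.erk' X :=
  erk'_eq_of_subset_closure subset_union_left (union_subset (N.subset_closure X hXE) h)

lemma two_ne_top : (2 : ℕ∞) ≠ ⊤ := by
  have : ((2 : ℕ) : ℕ∞) ≠ ⊤ := ENat.coe_ne_top 2
  simpa using this

lemma key_skew (N : Matroid α) (A B P : Set α)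
    (hAE : A ⊆ N.E) (hBE : B ⊆ N.E)
    (hPA : P ⊆ N.closure A) (hPB : P ⊆ N.closure B) (rP : N.erk' P = 2)
    (htri : (N.erk' A ≠ ⊤ ∧ N.erk' B ≠ ⊤ ∧ N.erk' A + N.erk' B = N.erk' (A ∪ B) + 2)
      ∨ N.closure (B ∪ P) = N.closure P ∨ N.closure (A ∪ P) = N.closure P)
    {Z W : Set α} (hZ : Z ⊆ A) (hW : W ⊆ B) :
    N.erk' ((Z ∪ W) ∪ P) + 2 = N.erk' (Z ∪ P) + N.erk' (W ∪ P) := by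
  have hPE : P ⊆ N.E := hPA.trans (N.closure_subset_ground A)
  rcases htri with ⟨hA, hB, heq⟩ | hclB | hclA
  · -- main case
    have e1 : N.erk' (A ∪ P) = N.erk' A := erk'_union_absorb hAE hPA
    have e2 : N.erk' (B ∪ P) = N.erk' B := erk'_union_absorb hBE hPB
    have e3 : N.erk' ((A ∪ B) ∪ P) = N.erk' (A ∪ B) :=
      erk'_union_absorb (union_subset hAE hBE)
        (hPA.trans (N.closure_subset_closure subset_union_left))
    have hABfin : N.erk' (A ∪ B) ≠ ⊤ :=
      ne_top_of_le_ne_top (WithTop.add_ne_top.mpr ⟨hA, hB⟩) (N.erk'_union_le A B)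
    -- upper bound
    have hsub := N.erk'_submod (Z ∪ P) (W ∪ P)
    have hU1 : (Z ∪ P) ∪ (W ∪ P) = (Z ∪ W) ∪ P := by ext a; simp; tauto
    rw [hU1] at hsub
    have hPint : (2 : ℕ∞) ≤ N.erk' ((Z ∪ P) ∩ (W ∪ P)) := by
      rw [← rP]; exact erk'_mono (subset_inter subset_union_right subset_union_right)
    have upper : N.erk' ((Z ∪ W) ∪ P) + 2 ≤ N.erk' (Z ∪ P) + N.erk' (W ∪ P) :=
      le_trans (by rw [add_comm]; exact add_le_add_left hPint _) hsub
    -- lower bound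
    have s1 := erk'_swap (M := N) (show Z ∪ P ⊆ A ∪ P from union_subset_union_left P hZ) (W ∪ P)
    have hU2 : (A ∪ P) ∪ (W ∪ P) = (A ∪ W) ∪ P := by ext a; simp; tauto
    rw [hU2, hU1] at s1
    have s2 := erk'_swap (M := N) (show W ∪ P ⊆ B ∪ P from union_subset_union_left P hW)
      ((A ∪ W) ∪ P)
    have hU3 : (B ∪ P) ∪ ((A ∪ W) ∪ P) = (A ∪ B) ∪ P := by
      ext a; simp; have := @hW a; tauto
    have hU4 : (W ∪ P) ∪ ((A ∪ W) ∪ P) = (A ∪ W) ∪ P := by ext a; simp; tauto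
    rw [hU3, hU4, e3] at s2
    rw [e1] at s1
    -- finiteness for lifting
    have hAWfin : N.erk' ((A ∪ W) ∪ P) ≠ ⊤ := by
      refine ne_top_of_le_ne_top ?_ (erk'_mono (union_subset_union_left P (union_subset_union_right A hW)))
      rw [e3]; exact hABfin
    have hZPfin : N.erk' (Z ∪ P) ≠ ⊤ := by
      refine ne_top_of_le_ne_top ?_ (erk'_mono (union_subset_union_left P hZ))
      rw [e1]; exact hA
    have hWPfin : N.erk' (W ∪ P) ≠ ⊤ := by
      refine ne_top_of_le_ne_top ?_ (erk'_mono (union_subset_union_left P hW))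
      rw [e2]; exact hB
    have hZWfin : N.erk' ((Z ∪ W) ∪ P) ≠ ⊤ := by
      refine ne_top_of_le_ne_top ?_
        (erk'_mono (union_subset_union_left P (union_subset_union hZ hW)))
      rw [e3]; exact hABfin
    rw [e2] at s2
    -- now: s1 : erk' (Z∪P) + erk' ((A∪W)∪P) ≤ erk' A + erk' ((Z∪W)∪P)
    --      s2 : erk' (W∪P) + erk' (A∪B) ≤ erk' B + erk' ((A∪W)∪P)
    lift N.erk' (Z ∪ P) to ℕ using hZPfin with zp
    lift N.erk' (W ∪ P) to ℕ using hWPfin with wp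
    lift N.erk' ((Z ∪ W) ∪ P) to ℕ using hZWfin with zwp
    lift N.erk' ((A ∪ W) ∪ P) to ℕ using hAWfin with awp
    lift N.erk' (A ∪ B) to ℕ using hABfin with ab
    lift N.erk' A to ℕ using hA with a
    lift N.erk' B to ℕ using hB with b
    have heq' : a + b = ab + 2 := by exact_mod_cast heq
    have s1' : zp + awp ≤ a + zwp := by exact_mod_cast s1
    have s2' : wp + ab ≤ b + awp := by exact_mod_cast s2
    have upper' : zwp + 2 ≤ zp + wp := by exact_mod_cast upper
    have : zwp + 2 = zp + wp := by omega
    exact_mod_cast this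
  · -- B side degenerate: closure (B ∪ P) = closure P
    have hWP : N.erk' (W ∪ P) = 2 := by
      rw [show N.erk' (W ∪ P) = N.erk' P from
        erk'_eq_of_subset_closure subset_union_right
          (union_subset
            ((hW.trans (N.subset_closure_of_subset subset_union_left (union_subset hBE hPE))).trans
              hclB.subset)
            (N.subset_closure P hPE)), rP]
    have hZW : N.erk' ((Z ∪ W) ∪ P) = N.erk' (Z ∪ P) := by
      refine erk'_eq_of_subset_closure (union_subset_union_left P subset_union_left) ?_
      have hWcl : W ⊆ N.closure (Z ∪ P) := by
        refine ((hW.trans (N.subset_closure_of_subset subset_union_left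
          (union_subset hBE hPE))).trans hclB.subset).trans ?_
        exact N.closure_subset_closure subset_union_right
      have hself : Z ∪ P ⊆ N.closure (Z ∪ P) :=
        N.subset_closure (Z ∪ P) (union_subset (hZ.trans hAE) hPE)
      exact union_subset (union_subset (subset_union_left.trans hself) hWcl)
        (subset_union_right.trans hself)
    rw [hZW, hWP]
  · -- A side degenerate
    have hZP : N.erk' (Z ∪ P) = 2 := by
      rw [show N.erk' (Z ∪ P) = N.erk' P from
        erk'_eq_of_subset_closure subset_union_right
          (union_subset
            ((hZ.trans (N.subset_closure_of_subset subset_union_left (union_subset hAE hPE))).trans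
              hclA.subset)
            (N.subset_closure P hPE)), rP]
    have hZW : N.erk' ((Z ∪ W) ∪ P) = N.erk' (W ∪ P) := by
      refine erk'_eq_of_subset_closure
        (union_subset_union_left P subset_union_right) ?_
      have hZcl : Z ⊆ N.closure (W ∪ P) := by
        refine ((hZ.trans (N.subset_closure_of_subset subset_union_left
          (union_subset hAE hPE))).trans hclA.subset).trans ?_
        exact N.closure_subset_closure subset_union_right
      have hself : W ∪ P ⊆ N.closure (W ∪ P) :=
        N.subset_closure (W ∪ P) (union_subset (hW.trans hBE) hPE)
      exact union_subset (union_subset hZcl (subset_union_left.trans hself))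
        (subset_union_right.trans hself)
    rw [hZW, hZP, add_comm]

lemma toNat_two : ((2:ℕ∞)).toNat = 2 := rfl

lemma conn_iff (N M : Matroid α) (A B P : Set α)
    (hU : A ∪ B = M.E)
    (hME : M.E ⊆ N.E)
    (hmrk : ∀ X, X ⊆ M.E → mRk M X = (N.erk' X).toNat)
    (hPB : P ⊆ N.closure B) (rP : N.erk' P = 2)
    (hskewB : ∀ Z, Z ⊆ A → N.erk' ((Z ∪ B) ∪ P) + 2 = N.erk' (Z ∪ P) + N.erk' (B ∪ P))
    (htri : (N.erk' A ≠ ⊤ ∧ N.erk' B ≠ ⊤) ∨ N.closure (B ∪ P) = N.closure P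
      ∨ N.closure (A ∪ P) = N.closure P)
    {Z : Set α} (hZ : Z ⊆ A) :
    mConn M Z B = 1 ↔ (N.erk' (Z ∪ P) = N.erk' Z + 1 ∧ N.erk' Z ≠ ⊤) := by
  have hAME : A ⊆ M.E := hU ▸ subset_union_left
  have hBME : B ⊆ M.E := hU ▸ subset_union_right
  have hBE : B ⊆ N.E := hBME.trans hME
  have hAE : A ⊆ N.E := hAME.trans hME
  have hPE : P ⊆ N.E := hPB.trans (N.closure_subset_ground B)
  have hZME : Z ⊆ M.E := hZ.trans hAME
  have hZBME : Z ∪ B ⊆ M.E := union_subset hZME hBME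
  have rBP : N.erk' (B ∪ P) = N.erk' B := erk'_union_absorb hBE hPB
  have rB2 : (2:ℕ∞) ≤ N.erk' B := by rw [← rP, ← erk'_closure N B]; exact erk'_mono hPB
  have dag : N.erk' (Z ∪ B) + 2 = N.erk' (Z ∪ P) + N.erk' B := by
    have h0 := hskewB Z hZ
    rwa [rBP, show N.erk' ((Z ∪ B) ∪ P) = N.erk' (Z ∪ B) from
      erk'_union_absorb (hZBME.trans hME)
        (hPB.trans (N.closure_subset_closure subset_union_right))] at h0
  have hmc : mConn M Z B = ((N.erk' Z).toNat : ℤ) + ((N.erk' B).toNat : ℤ)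
      - ((N.erk' (Z ∪ B)).toNat : ℤ) := by
    rw [mConn, hmrk Z hZME, hmrk B hBME, hmrk _ hZBME]
  by_cases hzT : N.erk' Z = ⊤
  · have hZB : N.erk' (Z ∪ B) = ⊤ :=
      top_le_iff.mp (hzT ▸ erk'_mono (M := N) (subset_union_left : Z ⊆ Z ∪ B))
    refine iff_of_false ?_ (by tauto)
    rw [hmc, hZB, hzT]
    rcases eq_or_ne (N.erk' B) ⊤ with hB | hB
    · simp [hB]
    · lift N.erk' B to ℕ using hB with b
      have hb2 : 2 ≤ b := by exact_mod_cast rB2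
      simp only [ENat.toNat_top, ENat.toNat_coe]
      intro h; omega
  · have hZPfin : N.erk' (Z ∪ P) ≠ ⊤ :=
      ne_top_of_le_ne_top (WithTop.add_ne_top.mpr ⟨hzT, by rw [rP]; exact two_ne_top⟩)
        (N.erk'_union_le Z P)
    rcases htri with ⟨hA, hB⟩ | hclB | hclA
    · have hZBfin : N.erk' (Z ∪ B) ≠ ⊤ := by
        intro h
        apply WithTop.add_ne_top.mpr ⟨hZPfin, hB⟩
        show N.erk' (Z ∪ P) + N.erk' B = ⊤
        rw [← dag, h, top_add]
      rw [hmc]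
      lift N.erk' Z to ℕ using hzT with z
      lift N.erk' B to ℕ using hB with b
      lift N.erk' (Z ∪ B) to ℕ using hZBfin with zb
      lift N.erk' (Z ∪ P) to ℕ using hZPfin with zp
      have dag' : zb + 2 = zp + b := by exact_mod_cast dag
      have hb2 : 2 ≤ b := by exact_mod_cast rB2
      simp only [ENat.toNat_coe]
      constructor
      · intro h
        refine ⟨?_, by simp⟩
        have : zp = z + 1 := by omega
        exact_mod_cast this
      · rintro ⟨h, -⟩
        have : zp = z + 1 := by exact_mod_cast h
        omega
    · have hBP2 : N.erk' (B ∪ P) = 2 := by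
        rw [show N.erk' (B ∪ P) = N.erk' P from
          erk'_eq_of_subset_closure subset_union_right
            (union_subset
              ((N.subset_closure_of_subset (subset_union_left : B ⊆ B ∪ P)
                (union_subset hBE hPE)).trans hclB.subset)
              (N.subset_closure P hPE)), rP]
      have rB2eq : N.erk' B = 2 := by rw [← rBP, hBP2]
      have rZB_eq : N.erk' (Z ∪ B) = N.erk' (Z ∪ P) := by
        rw [rB2eq] at dag
        exact WithTop.add_right_cancel two_ne_top dag
      rw [hmc, rZB_eq, rB2eq]
      lift N.erk' Z to ℕ using hzT with z
      lift N.erk' (Z ∪ P) to ℕ using hZPfin with zp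
      simp only [ENat.toNat_coe, toNat_two]
      constructor
      · intro h
        refine ⟨?_, by simp⟩
        have : zp = z + 1 := by omega
        exact_mod_cast this
      · rintro ⟨h, -⟩
        have : zp = z + 1 := by exact_mod_cast h
        omega
    · have rZP : N.erk' (Z ∪ P) = 2 := by
        rw [show N.erk' (Z ∪ P) = N.erk' P from
          erk'_eq_of_subset_closure subset_union_right
            (union_subset
              (((hZ.trans (N.subset_closure_of_subset (subset_union_left : A ⊆ A ∪ P)
                (union_subset hAE hPE)))).trans hclA.subset)
              (N.subset_closure P hPE)), rP]
      have rZB_eq : N.erk' (Z ∪ B) = N.erk' B := by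
        rw [rZP, add_comm (2:ℕ∞) (N.erk' B)] at dag
        exact WithTop.add_right_cancel two_ne_top dag
      rw [hmc, rZB_eq, rZP]
      lift N.erk' Z to ℕ using hzT with z
      constructor
      · intro h
        have hz1 : z = 1 := by
          simp only [ENat.toNat_coe] at h
          omega
        subst hz1
        refine ⟨?_, by simp⟩
        norm_num
      · rintro ⟨h, -⟩
        have hz1 : z + 1 = 2 := by exact_mod_cast h.symm
        simp only [ENat.toNat_coe]
        omega

end Matroid

open Matroid

/-- If `⊓(A' ∪ B', L) = 1 = ⊓(B', L)` and `A'` contains a special strand, then `B'` contains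
a special strand, where special strands are those in the strand-graph component of `A₀`. -/
theorem special_strand_transfer [DecidableEq α] (M M'' : Matroid α) (A B A₀ B₀ : Set α)
    (x y : α) (L : Set α)
    (hsep : Exact3Sep M A B)
    (hA₀ : Strand M A B A₀) (hB₀ : Strand M B A B₀) (hconn : mConn M A₀ B₀ = 1)
    (hguts : GutsPairExt M'' M A B x y) (hL : L = M''.closure {x, y})
    (A' B' : Set α) (hA' : A' ⊆ A) (hB' : B' ⊆ B)
    (h1 : mConn M'' (A' ∪ B') L = 1) (h2 : mConn M'' B' L = 1)
    (hspecial : ∃ S, S ⊆ A' ∧ Strand M A B S ∧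
      Relation.ReflTransGen (StrandAdj M A B) A₀ S) :
    ∃ T, T ⊆ B' ∧ Strand M B A T ∧
      Relation.ReflTransGen (StrandAdj M A B) A₀ T := by
  classical
  obtain ⟨hdj, hU, hrkEq⟩ := hsep
  obtain ⟨⟨hxE, hyE, hxy, hE'', hres⟩, ⟨hclone, hPind⟩, hPsub⟩ := hguts
  subst hL
  set P : Set α := {x, y} with hPdef
  have hPA : P ⊆ M''.closure A := (subset_inter_iff.mp hPsub).1
  have hPB : P ⊆ M''.closure B := (subset_inter_iff.mp hPsub).2
  have hME : M.E ⊆ M''.E := by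
    rw [hE'']; exact (subset_insert _ _).trans (subset_insert _ _)
  have hmrk : ∀ X, X ⊆ M.E → mRk M X = (M''.erk' X).toNat := by
    intro X hX
    rw [← hres, mRk_eq_toNat_erk', erk'_restrict M'' hX]
  have hAME : A ⊆ M.E := hU ▸ subset_union_left
  have hBME : B ⊆ M.E := hU ▸ subset_union_right
  have hAE : A ⊆ M''.E := hAME.trans hME
  have hBE : B ⊆ M''.E := hBME.trans hME
  have hPE : P ⊆ M''.E := hPA.trans (M''.closure_subset_ground A)
  have rP : M''.erk' P = 2 := by rw [hPind.erk'_eq, encard_pair hxy]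
  -- translate the separation rank equation
  rw [← hU] at hrkEq
  rw [hmrk A hAME, hmrk B hBME, hmrk _ hU.le] at hrkEq
  -- a helper for the degenerate cases
  have hclosure_eq : ∀ C : Set α, C ⊆ M''.E → P ⊆ M''.closure C → M''.erk' C = 2 →
      M''.closure (C ∪ P) = M''.closure P := by
    intro C hCE hPC hC2
    have hcl1 : M''.closure (C ∪ P) = M''.closure C := by
      apply subset_antisymm
      · exact M''.closure_subset_closure_of_subset_closure
          (union_subset (M''.subset_closure C hCE) hPC)
      · exact M''.closure_subset_closure subset_union_left
    obtain ⟨J, hJ, hPJ⟩ := hPind.subset_isBasis'_of_subset hPC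
    have hJcard : J.encard = 2 := by rw [← hJ.erk'_eq, erk'_closure, hC2]
    have hJfin : J.Finite := by
      rw [← encard_ne_top_iff, hJcard]; exact two_ne_top
    have hPJ_eq : P = J := by
      refine hJfin.eq_of_subset_of_encard_le' hPJ ?_
      rw [hJcard, encard_pair hxy]
    rw [hcl1, show M''.closure C = M''.closure J from
      by rw [hJ.closure_eq_closure, Matroid.closure_closure], ← hPJ_eq]
  have htri_full : (M''.erk' A ≠ ⊤ ∧ M''.erk' B ≠ ⊤ ∧
      M''.erk' A + M''.erk' B = M''.erk' (A ∪ B) + 2)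
      ∨ M''.closure (B ∪ P) = M''.closure P ∨ M''.closure (A ∪ P) = M''.closure P := by
    by_cases hA : M''.erk' A = ⊤
    · right; left
      have hABtop : M''.erk' (A ∪ B) = ⊤ :=
        top_le_iff.mp (hA ▸ erk'_mono (M := M'') subset_union_left)
      have hBfin : M''.erk' B ≠ ⊤ := by
        intro hB; rw [hA, hB, hABtop] at hrkEq; simp at hrkEq
      have hB2 : M''.erk' B = 2 := by
        lift M''.erk' B to ℕ using hBfin with b
        rw [hA, hABtop] at hrkEq
        simp only [ENat.toNat_top, ENat.toNat_coe] at hrkEq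
        have : b = 2 := by omega
        exact_mod_cast this
      exact hclosure_eq B hBE hPB hB2
    · by_cases hB : M''.erk' B = ⊤
      · right; right
        have hABtop : M''.erk' (A ∪ B) = ⊤ :=
          top_le_iff.mp (hB ▸ erk'_mono (M := M'') subset_union_right)
        have hA2 : M''.erk' A = 2 := by
          lift M''.erk' A to ℕ using hA with a
          rw [hB, hABtop] at hrkEq
          simp only [ENat.toNat_top, ENat.toNat_coe] at hrkEq
          have : a = 2 := by omega
          exact_mod_cast this
        exact hclosure_eq A hAE hPA hA2
      · left
        refine ⟨hA, hB, ?_⟩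
        have hABfin : M''.erk' (A ∪ B) ≠ ⊤ :=
          ne_top_of_le_ne_top (WithTop.add_ne_top.mpr ⟨hA, hB⟩) (M''.erk'_union_le A B)
        lift M''.erk' A to ℕ using hA with a
        lift M''.erk' B to ℕ using hB with b
        lift M''.erk' (A ∪ B) to ℕ using hABfin with ab
        simp only [ENat.toNat_coe] at hrkEq
        have : a + b = ab + 2 := by omega
        exact_mod_cast this
  have hskew : ∀ {Z W : Set α}, Z ⊆ A → W ⊆ B →
      M''.erk' ((Z ∪ W) ∪ P) + 2 = M''.erk' (Z ∪ P) + M''.erk' (W ∪ P) :=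
    fun hZs hWs => key_skew M'' A B P hAE hBE hPA hPB rP htri_full hZs hWs
  have htriAB : (M''.erk' A ≠ ⊤ ∧ M''.erk' B ≠ ⊤) ∨ M''.closure (B ∪ P) = M''.closure P
      ∨ M''.closure (A ∪ P) = M''.closure P := by
    rcases htri_full with ⟨u1, u2, -⟩ | h | h
    · exact Or.inl ⟨u1, u2⟩
    · exact Or.inr (Or.inl h)
    · exact Or.inr (Or.inr h)
  have htriBA : (M''.erk' B ≠ ⊤ ∧ M''.erk' A ≠ ⊤) ∨ M''.closure (A ∪ P) = M''.closure P
      ∨ M''.closure (B ∪ P) = M''.closure P := by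
    rcases htri_full with ⟨u1, u2, -⟩ | h | h
    · exact Or.inl ⟨u2, u1⟩
    · exact Or.inr (Or.inr h)
    · exact Or.inr (Or.inl h)
  have hskewB : ∀ Z, Z ⊆ A →
      M''.erk' ((Z ∪ B) ∪ P) + 2 = M''.erk' (Z ∪ P) + M''.erk' (B ∪ P) :=
    fun Z hZs => hskew hZs Subset.rfl
  have hskewA : ∀ Z, Z ⊆ B →
      M''.erk' ((Z ∪ A) ∪ P) + 2 = M''.erk' (Z ∪ P) + M''.erk' (A ∪ P) := by
    intro Z hZs
    have h0 := hskew (Subset.rfl : A ⊆ A) hZs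
    rw [show (A ∪ Z) ∪ P = (Z ∪ A) ∪ P from by rw [union_comm A Z]] at h0
    rw [h0, add_comm]
  have cAB : ∀ {Z : Set α}, Z ⊆ A →
      (mConn M Z B = 1 ↔ (M''.erk' (Z ∪ P) = M''.erk' Z + 1 ∧ M''.erk' Z ≠ ⊤)) :=
    fun hZs => conn_iff M'' M A B P hU hME hmrk hPB rP hskewB htriAB hZs
  have cBA : ∀ {Z : Set α}, Z ⊆ B →
      (mConn M Z A = 1 ↔ (M''.erk' (Z ∪ P) = M''.erk' Z + 1 ∧ M''.erk' Z ≠ ⊤)) :=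
    fun hZs => conn_iff M'' M B A P (by rw [union_comm]; exact hU) hME hmrk hPA rP
      hskewA htriBA hZs
  -- translate h1 and h2
  have hLP : ∀ X : Set α, M''.erk' (X ∪ M''.closure P) = M''.erk' (X ∪ P) :=
    fun X => erk'_congr (by rw [closure_union_closure_right_eq])
  have hconv : ∀ X : Set α, mConn M'' X (M''.closure P)
      = ((M''.erk' X).toNat : ℤ) + 2 - ((M''.erk' (X ∪ P)).toNat : ℤ) := by
    intro X
    rw [mConn, mRk_eq_toNat_erk', mRk_eq_toNat_erk', mRk_eq_toNat_erk', hLP,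
      erk'_closure, rP, toNat_two]
    norm_num
  rw [hconv] at h1 h2
  have step : ∀ X : Set α,
      ((M''.erk' X).toNat : ℤ) + 2 - ((M''.erk' (X ∪ P)).toNat : ℤ) = 1 →
      M''.erk' (X ∪ P) = M''.erk' X + 1 ∧ M''.erk' X ≠ ⊤ := by
    intro X h
    by_cases hXT : M''.erk' X = ⊤
    · exfalso
      have hXP : M''.erk' (X ∪ P) = ⊤ :=
        top_le_iff.mp (hXT ▸ erk'_mono (M := M'') subset_union_left)
      rw [hXT, hXP] at h; simp at h
    · have hXPfin : M''.erk' (X ∪ P) ≠ ⊤ :=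
        ne_top_of_le_ne_top (WithTop.add_ne_top.mpr ⟨hXT, by rw [rP]; exact two_ne_top⟩)
          (M''.erk'_union_le X P)
      refine ⟨?_, hXT⟩
      lift M''.erk' X to ℕ using hXT with n
      lift M''.erk' (X ∪ P) to ℕ using hXPfin with np
      simp only [ENat.toNat_coe] at h
      have : np = n + 1 := by omega
      exact_mod_cast this
  obtain ⟨hB'P, hB'fin⟩ := step B' h2
  obtain ⟨hABP, hABfin⟩ := step (A' ∪ B') h1
  obtain ⟨S, hSA', hSstr, hpath⟩ := hspecial
  have hSA : S ⊆ A := hSA'.trans hA'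
  obtain ⟨eS, hSfin⟩ := (cAB hSA).mp hSstr.2.1
  -- the sandwich: r((S ∪ B') ∪ P) = r(S ∪ B') + 1
  have hSB'sub : S ∪ B' ⊆ A' ∪ B' := union_subset_union_left B' hSA'
  have hSB'fin : M''.erk' (S ∪ B') ≠ ⊤ := ne_top_of_le_ne_top hABfin (erk'_mono hSB'sub)
  have hSB'Pfin : M''.erk' ((S ∪ B') ∪ P) ≠ ⊤ :=
    ne_top_of_le_ne_top (WithTop.add_ne_top.mpr ⟨hSB'fin, by rw [rP]; exact two_ne_top⟩)
      (M''.erk'_union_le (S ∪ B') P)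
  have hSB'P : M''.erk' ((S ∪ B') ∪ P) = M''.erk' (S ∪ B') + 1 := by
    have i1 := erk'_swap (M := M'') (subset_union_right : B' ⊆ S ∪ B') P
    have i2 := erk'_swap (M := M'') hSB'sub P
    rw [hB'P] at i1
    rw [hABP] at i2
    lift M''.erk' B' to ℕ using hB'fin with b'
    lift M''.erk' (S ∪ B') to ℕ using hSB'fin with sb
    lift M''.erk' ((S ∪ B') ∪ P) to ℕ using hSB'Pfin with sbp
    lift M''.erk' (A' ∪ B') to ℕ using hABfin with ab
    have i1' : b' + sbp ≤ sb + (b' + 1) := by exact_mod_cast i1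
    have i2' : sb + (ab + 1) ≤ ab + sbp := by exact_mod_cast i2
    have : sbp = sb + 1 := by omega
    exact_mod_cast this
  -- pick a finite basis of B' to seed the minimization
  obtain ⟨I0, hI0⟩ := M''.exists_isBasis' B'
  have hI0fin : I0.Finite := by
    rw [← encard_ne_top_iff, ← hI0.erk'_eq]; exact hB'fin
  have hI0cl : M''.closure I0 = M''.closure B' := hI0.closure_eq_closure
  have hrI0 : M''.erk' I0 = M''.erk' B' := by rw [hI0.indep.erk'_eq, ← hI0.erk'_eq]
  have hclIP : M''.closure (I0 ∪ P) = M''.closure (B' ∪ P) := by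
    rw [← closure_union_closure_left_eq, hI0cl, closure_union_closure_left_eq]
  have hclSI : M''.closure (S ∪ I0) = M''.closure (S ∪ B') := by
    rw [← closure_union_closure_right_eq, hI0cl, closure_union_closure_right_eq]
  have hclSIP : M''.closure ((S ∪ I0) ∪ P) = M''.closure ((S ∪ B') ∪ P) := by
    rw [union_assoc, union_assoc, ← closure_union_closure_right_eq, hclIP,
      closure_union_closure_right_eq]
  set Good : Set α → Prop := fun T => T ⊆ B' ∧ T.Finite ∧
      M''.erk' (T ∪ P) = M''.erk' T + 1 ∧
      M''.erk' ((S ∪ T) ∪ P) = M''.erk' (S ∪ T) + 1 with hGoodDef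
  have hI0Good : Good I0 := by
    refine ⟨hI0.subset, hI0fin, ?_, ?_⟩
    · rw [erk'_congr hclIP, hrI0, hB'P]
    · rw [erk'_congr hclSIP, erk'_congr hclSI, hSB'P]
  have hne : (Set.ncard '' {T | Good T}).Nonempty := ⟨_, ⟨I0, hI0Good, rfl⟩⟩
  obtain ⟨T, hTGood, hTcard⟩ := Nat.sInf_mem hne
  have hmin : ∀ T', Good T' → ¬ T' ⊂ T := by
    intro T' hT' hss
    have hlt : T'.ncard < T.ncard := Set.ncard_lt_ncard hss hTGood.2.1
    have hle : sInf (Set.ncard '' {T | Good T}) ≤ T'.ncard := Nat.sInf_le ⟨T', hT', rfl⟩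
    omega
  obtain ⟨hTB', hTfin, hTP, hSTP⟩ := hTGood
  have hTB : T ⊆ B := hTB'.trans hB'
  have hTrfin : M''.erk' T ≠ ⊤ :=
    ne_top_of_le_ne_top (encard_ne_top_iff.mpr hTfin) (erk'_le_encard M'' T)
  have hSTfin : M''.erk' (S ∪ T) ≠ ⊤ :=
    ne_top_of_le_ne_top hSB'fin (erk'_mono (union_subset_union_right S hTB'))
  have hSTPfin : M''.erk' ((S ∪ T) ∪ P) ≠ ⊤ := by
    rw [hSTP]; exact WithTop.add_ne_top.mpr ⟨hSTfin, WithTop.one_ne_top⟩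
  have hTstrand : Strand M B A T := by
    refine ⟨hTB, (cBA hTB).mpr ⟨hTP, hTrfin⟩, ?_⟩
    intro T' hss hconn'
    have hT'B : T' ⊆ B := hss.subset.trans hTB
    obtain ⟨e1, e2⟩ := (cBA hT'B).mp hconn'
    have hT'fin : T'.Finite := hTfin.subset hss.subset
    have hST'fin : M''.erk' (S ∪ T') ≠ ⊤ :=
      ne_top_of_le_ne_top hSTfin (erk'_mono (union_subset_union_right S hss.subset))
    have hST'Pfin : M''.erk' ((S ∪ T') ∪ P) ≠ ⊤ :=
      ne_top_of_le_ne_top (WithTop.add_ne_top.mpr ⟨hST'fin, by rw [rP]; exact two_ne_top⟩)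
        (M''.erk'_union_le (S ∪ T') P)
    have i1' := erk'_swap (M := M'') (subset_union_right : T' ⊆ S ∪ T') P
    have i2' := erk'_swap (M := M'') (union_subset_union_right S hss.subset) P
    rw [e1] at i1'
    rw [hSTP] at i2'
    have hST'P : M''.erk' ((S ∪ T') ∪ P) = M''.erk' (S ∪ T') + 1 := by
      lift M''.erk' T' to ℕ using e2 with t'
      lift M''.erk' (S ∪ T') to ℕ using hST'fin with st'
      lift M''.erk' ((S ∪ T') ∪ P) to ℕ using hST'Pfin with stp'
      lift M''.erk' (S ∪ T) to ℕ using hSTfin with st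
      have j1 : t' + stp' ≤ st' + (t' + 1) := by exact_mod_cast i1'
      have j2 : st' + (st + 1) ≤ st + stp' := by exact_mod_cast i2'
      have : stp' = st' + 1 := by omega
      exact_mod_cast this
    exact hmin T' ⟨hss.subset.trans hTB', hT'fin, e1, hST'P⟩ hss
  have hconnST : mConn M S T = 1 := by
    have hST := hskew hSA hTB
    rw [hSTP, eS, hTP] at hST
    have hTP2 : (2 : ℕ∞) ≤ M''.erk' T + 1 := by
      rw [← hTP, ← rP]; exact erk'_mono subset_union_right
    have hSTME : S ∪ T ⊆ M.E := union_subset (hSA.trans hAME) (hTB.trans hBME)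
    rw [mConn, hmrk S (hSA.trans hAME), hmrk T (hTB.trans hBME), hmrk _ hSTME]
    lift M''.erk' S to ℕ using hSfin with s
    lift M''.erk' T to ℕ using hTrfin with t
    lift M''.erk' (S ∪ T) to ℕ using hSTfin with st
    have j1 : st + 1 + 2 = s + 1 + (t + 1) := by exact_mod_cast hST
    have j2 : 2 ≤ t + 1 := by exact_mod_cast hTP2
    simp only [ENat.toNat_coe]
    omega
  have hadj : StrandAdj M A B S T := ⟨Or.inl ⟨hSstr, hTstrand⟩, hconnST⟩
  exact ⟨T, hTB', hTstrand, hpath.tail hadj⟩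
end

section
/- Let (A, B) be an exact 3-separation of a matroid M whose strand graph component containing a given A-strand A₀ and B-strand B₀ (with ⊓(A₀, B₀) = 1) induces a complete bipartite graph. Let Z be a bunch of strands with at least two A-strands and at least two B-strands. Then Z is complete if and only if whenever Z contains A-strands A′, A″ and B-strands B′, B″ such that at least three of ⊓(A′, B′), ⊓(A′, B″), ⊓(A″, B′), ⊓(A″, B″) are one, all four are one. -/
open Set

variable {α : Type*}

lemma mRk_empty' (M : Matroid α) : mRk M ∅ = 0 := by
  have h : {I | M.Indep I ∧ I ⊆ (∅ : Set α)} = {∅} := by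
    ext I
    constructor
    · rintro ⟨-, h⟩; exact subset_empty_iff.mp h
    · rintro rfl; exact ⟨M.empty_indep, rfl.subset⟩
  rw [mRk, h]
  simp

lemma mConn_comm' (M : Matroid α) (S T : Set α) : mConn M S T = mConn M T S := by
  simp [mConn, union_comm]; ring

lemma not_both_strand' (M : Matroid α) {A B S : Set α} (hAB : Disjoint A B)
    (h1 : Strand M A B S) (h2 : Strand M B A S) : False := by
  have hS : S = ∅ := by
    have hsub : S ⊆ A ∩ B := subset_inter h1.1 h2.1
    rw [hAB.inter_eq] at hsub
    exact subset_empty_iff.mp hsub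
  have := h1.2.1
  rw [hS] at this
  simp [mConn, mRk_empty'] at this

lemma strandAdj_symm' (M : Matroid α) (A B : Set α) :
    Symmetric (StrandAdj M A B) := by
  rintro S T ⟨h1 | h1, h2⟩
  · exact ⟨Or.inr ⟨h1.2, h1.1⟩, (mConn_comm' M S T) ▸ h2⟩
  · exact ⟨Or.inl ⟨h1.2, h1.1⟩, (mConn_comm' M S T) ▸ h2⟩

lemma bunch_key (M : Matroid α) (A B : Set α) (S₀ : Set α) (Z : Set (Set α))
    (hAB : Disjoint A B)
    (hZeq : Z = {W | Relation.ReflTransGen (StrandAdj M A B) S₀ W})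
    (hRHS : ∀ A' A'' B' B'' : Set α, A' ∈ Z → A'' ∈ Z → B' ∈ Z → B'' ∈ Z →
      Strand M A B A' → Strand M A B A'' → Strand M B A B' → Strand M B A B'' →
      ((mConn M A' B' = 1 ∧ mConn M A' B'' = 1 ∧ mConn M A'' B' = 1) ∨
       (mConn M A' B' = 1 ∧ mConn M A' B'' = 1 ∧ mConn M A'' B'' = 1) ∨
       (mConn M A' B' = 1 ∧ mConn M A'' B' = 1 ∧ mConn M A'' B'' = 1) ∨
       (mConn M A' B'' = 1 ∧ mConn M A'' B' = 1 ∧ mConn M A'' B'' = 1)) →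
      (mConn M A' B' = 1 ∧ mConn M A' B'' = 1 ∧
       mConn M A'' B' = 1 ∧ mConn M A'' B'' = 1))
    (S T : Set α) (hSZ : S ∈ Z) (hTZ : T ∈ Z)
    (hS : Strand M A B S) (hT : Strand M B A T) : mConn M S T = 1 := by
  subst hZeq
  have hmem : ∀ W, Relation.ReflTransGen (StrandAdj M A B) S W →
      W ∈ {W | Relation.ReflTransGen (StrandAdj M A B) S₀ W} :=
    fun W h => Relation.ReflTransGen.trans hSZ h
  have hsymm : Symmetric (Relation.ReflTransGen (StrandAdj M A B)) := fun x y h => by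
    induction h with
    | refl => exact Relation.ReflTransGen.refl
    | tail _ e ih => exact Relation.ReflTransGen.head (strandAdj_symm' M A B e) ih
  have hST : Relation.ReflTransGen (StrandAdj M A B) S T :=
    Relation.ReflTransGen.trans (hsymm hSZ) hTZ
  have key : ∀ W, Relation.ReflTransGen (StrandAdj M A B) S W →
      (Strand M B A W → mConn M S W = 1) ∧
      (Strand M A B W → (W = S ∨ ∃ U, Relation.ReflTransGen (StrandAdj M A B) S U ∧
        Strand M B A U ∧ mConn M S U = 1 ∧ mConn M W U = 1)) := by
    intro W hW
    induction hW with
    | refl =>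
      refine ⟨fun hB => (not_both_strand' M hAB hS hB).elim, fun _ => Or.inl rfl⟩
    | @tail b c h e ih =>
      obtain ⟨hside, hconn⟩ := e
      constructor
      · intro hWc
        have hbA : Strand M A B b := by
          rcases hside with ⟨h1, h2⟩ | ⟨h1, h2⟩
          · exact h1
          · exact (not_both_strand' M hAB h2 hWc).elim
        rcases ih.2 hbA with rfl | ⟨U, hUZ, hUB, hSU, hbU⟩
        · exact hconn
        · have := hRHS S b U c hSZ (hmem b h) (hmem U hUZ)
            (hmem c (h.tail ⟨hside, hconn⟩)) hS hbA hUB hWc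
            (Or.inr (Or.inr (Or.inl ⟨hSU, hbU, hconn⟩)))
          exact this.2.1
      · intro hWc
        have hbB : Strand M B A b := by
          rcases hside with ⟨h1, h2⟩ | ⟨h1, h2⟩
          · exact (not_both_strand' M hAB hWc h2).elim
          · exact h1
        exact Or.inr ⟨b, h, hbB, ih.1 hbB, (mConn_comm' M c b).trans hconn⟩
  exact (key T hST).1 hT

/-- A bunch of strands with at least two strands on each side is complete iff whenever at
least three of the four cross local connectivities among two `A`-strands and two
`B`-strands in the bunch are one, all four are one. -/
theorem bunch_complete_iff (M : Matroid α) (A B A₀ B₀ : Set α) (Z : Set (Set α))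
    (hsep : Exact3Sep M A B)
    (hA₀ : Strand M A B A₀) (hB₀ : Strand M B A B₀) (hconn : mConn M A₀ B₀ = 1)
    (hcomp : ∀ S T : Set α,
      Relation.ReflTransGen (StrandAdj M A B) A₀ S →
      Relation.ReflTransGen (StrandAdj M A B) A₀ T →
      Strand M A B S → Strand M B A T → mConn M S T = 1)
    (hbunch : ∃ S T : Set α, StrandAdj M A B S T ∧
      Z = {W | Relation.ReflTransGen (StrandAdj M A B) S W})
    (htwoA : ∃ S₁ S₂, S₁ ∈ Z ∧ S₂ ∈ Z ∧ S₁ ≠ S₂ ∧ Strand M A B S₁ ∧ Strand M A B S₂)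
    (htwoB : ∃ T₁ T₂, T₁ ∈ Z ∧ T₂ ∈ Z ∧ T₁ ≠ T₂ ∧ Strand M B A T₁ ∧ Strand M B A T₂) :
    (∀ S T : Set α, S ∈ Z → T ∈ Z → Strand M A B S → Strand M B A T → mConn M S T = 1) ↔
    (∀ A' A'' B' B'' : Set α, A' ∈ Z → A'' ∈ Z → B' ∈ Z → B'' ∈ Z →
      Strand M A B A' → Strand M A B A'' → Strand M B A B' → Strand M B A B'' →
      ((mConn M A' B' = 1 ∧ mConn M A' B'' = 1 ∧ mConn M A'' B' = 1) ∨
       (mConn M A' B' = 1 ∧ mConn M A' B'' = 1 ∧ mConn M A'' B'' = 1) ∨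
       (mConn M A' B' = 1 ∧ mConn M A'' B' = 1 ∧ mConn M A'' B'' = 1) ∨
       (mConn M A' B'' = 1 ∧ mConn M A'' B' = 1 ∧ mConn M A'' B'' = 1)) →
      (mConn M A' B' = 1 ∧ mConn M A' B'' = 1 ∧
       mConn M A'' B' = 1 ∧ mConn M A'' B'' = 1)) := by
  constructor
  · intro hcompl A' A'' B' B'' hA' hA'' hB' hB'' sA' sA'' sB' sB'' _
    exact ⟨hcompl _ _ hA' hB' sA' sB', hcompl _ _ hA' hB'' sA' sB'',
      hcompl _ _ hA'' hB' sA'' sB', hcompl _ _ hA'' hB'' sA'' sB''⟩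
  · intro hRHS S T hSZ hTZ hS hT
    obtain ⟨S₀, T₀, hadj, hZeq⟩ := hbunch
    exact bunch_key M A B S₀ Z hsep.1 hZeq hRHS S T hSZ hTZ hS hT
end
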